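/- arXiv:1902.11256 — 8 statements merged into one kernel-verified Lean document; each statement's English description precedes it below -/
import Mathlib

section
/- Let w = w_1⋯w_n be a fixed word over a finite alphabet 𝒜. Define φ_w mapping a non-commutative formal power series X to the (n+1)×(n+1) upper triangular matrix with φ_w(X)_{i,j} = coefficient of the subword w_i⋯w_{j−1} in X for i < j, φ_w(X)_{i,i} = coefficient of the empty word in X, and 0 for i > j. Then φ_w is an algebra homomorphism: it is ℂ-linear and satisfies φ_w(X·Y) = φ_w(X)·φ_w(Y). -/
open scoped BigOperators

namespace NC

/-- The multiplicative identity series (coefficient 1 on the empty word). -/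
noncomputable def one {α : Type*} : List α → ℂ
  | [] => 1
  | _ :: _ => 0

/-- Cauchy (convolution) product of noncommutative formal power series,
represented by their coefficient functions on words. -/
noncomputable def mul {α : Type*} (X Y : List α → ℂ) : List α → ℂ :=
  fun w => ∑ i ∈ Finset.range (w.length + 1), X (w.take i) * Y (w.drop i)

/-- Commutator `[X,Y] = XY - YX`. -/
noncomputable def lie {α : Type*} (X Y : List α → ℂ) : List α → ℂ := mul X Y - mul Y X

/-- Powers of a series. -/
noncomputable def pow {α : Type*} (X : List α → ℂ) : ℕ → (List α → ℂ)
  | 0 => one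
  | n + 1 => mul X (pow X n)

/-- The exponential series `∑ Xᵏ/k!`.  For `X` with zero constant term the
coefficient of a word `w` only receives contributions from `k ≤ length w`,
so this finite sum is the exact coefficient of `w` in `exp X`. -/
noncomputable def exp {α : Type*} (X : List α → ℂ) : List α → ℂ :=
  fun w => ∑ k ∈ Finset.range (w.length + 1), ((Nat.factorial k : ℂ))⁻¹ * pow X k w

/-- The generator `a` as a series. -/
noncomputable def gen {α : Type*} [DecidableEq α] (a : α) : List α → ℂ :=
  fun w => if w = [a] then 1 else 0

/-- Grade of a word: sum of the grades of its letters. -/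
def wgrade {α : Type*} (grade : α → ℕ) (w : List α) : ℕ := (w.map grade).sum

/-- Pure Lie elements of a given grade: generators, and brackets of pure elements. -/
inductive IsPure {α : Type*} [DecidableEq α] (grade : α → ℕ) :
    (List α → ℂ) → ℕ → Prop
  | gen (a : α) : IsPure grade (gen a) (grade a)
  | bracket {X Y : List α → ℂ} {k l : ℕ} :
      IsPure grade X k → IsPure grade Y l → IsPure grade (lie X Y) (k + l)

/-- The homogeneous component `𝔤ₖ` of the free Lie algebra: span of pure elements of grade `k`. -/
noncomputable def gk {α : Type*} [DecidableEq α] (grade : α → ℕ) (k : ℕ) :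
    Submodule ℂ (List α → ℂ) :=
  Submodule.span ℂ {X | IsPure grade X k}

/-- `ℛ_q`: series supported on words of grade `≥ q`. -/
def Rset {α : Type*} (grade : α → ℕ) (q : ℕ) : Set (List α → ℂ) :=
  {R | ∀ w : List α, wgrade grade w < q → R w = 0}

/-- Membership in the free Lie algebra `𝔤 = ⊕ₖ 𝔤ₖ`: a finite sum of homogeneous components. -/
def inLie {α : Type*} [DecidableEq α] (grade : α → ℕ) (Φ : List α → ℂ) : Prop :=
  ∃ (q : ℕ) (X : ℕ → List α → ℂ),
    (∀ k, 1 ≤ k → X k ∈ gk grade k) ∧ Φ = ∑ k ∈ Finset.Icc 1 q, X k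

/-- Product of the exponentials of a list of exponents. -/
noncomputable def prodExp {α : Type*} : List (List α → ℂ) → (List α → ℂ)
  | [] => one
  | X :: rest => mul (exp X) (prodExp rest)

/-- The scheme `exp(Φ_J)⋯exp(Φ_1)` associated with exponents `Φ_1, …, Φ_J`. -/
noncomputable def scheme {α : Type*} {J : ℕ} (Φ : Fin J → List α → ℂ) : List α → ℂ :=
  prodExp (List.ofFn Φ).reverse

/-- Lyndon words: nonempty and lexicographically strictly smaller than each proper right factor. -/
def Lyndon {α : Type*} [LT α] (w : List α) : Prop :=
  w ≠ [] ∧ ∀ i : ℕ, 0 < i → i < w.length → w < w.drop i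

/-- The matrix of coefficients of subwords of `w` in a series `X`. -/
noncomputable def phi {α : Type*} (w : List α) (X : List α → ℂ) :
    Matrix (Fin (w.length + 1)) (Fin (w.length + 1)) ℂ :=
  Matrix.of fun i j =>
    if (i : ℕ) < (j : ℕ) then X ((w.drop (i : ℕ)).take ((j : ℕ) - (i : ℕ)))
    else if (i : ℕ) = (j : ℕ) then X []
    else 0

end NC

/-- For a fixed word `w` of length `n`, the map `φ_w` sending a
noncommutative formal power series `X` to the `(n+1)×(n+1)` upper triangular matrix of
coefficients of subwords of `w` is an algebra homomorphism: it is `ℂ`-linear and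
sends the convolution product to the matrix product. -/
theorem phi_isAlgHom {α : Type*} (w : List α) :
    (∀ (a b : ℂ) (X Y : List α → ℂ),
        NC.phi w (a • X + b • Y) = a • NC.phi w X + b • NC.phi w Y) ∧
    (∀ X Y : List α → ℂ, NC.phi w (NC.mul X Y) = NC.phi w X * NC.phi w Y) := by
  constructor
  · intro a b X Y
    ext i j
    simp only [NC.phi, Matrix.of_apply, Matrix.add_apply, Matrix.smul_apply, Pi.add_apply,
      Pi.smul_apply, smul_eq_mul]
    split_ifs <;> ring
  · intro X Y
    ext i j
    simp only [NC.phi, Matrix.of_apply, Matrix.mul_apply]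
    have hA : ∀ (m l : ℕ) (Z : List α → ℂ),
        (if m < l then Z ((w.drop m).take (l - m)) else if m = l then Z [] else 0)
        = if m ≤ l then Z ((w.drop m).take (l - m)) else 0 := by
      intro m l Z
      rcases lt_trichotomy m l with h | h | h
      · rw [if_pos h, if_pos h.le]
      · subst h
        rw [if_neg (lt_irrefl _), if_pos rfl, if_pos le_rfl, Nat.sub_self, List.take_zero]
      · rw [if_neg (by omega), if_neg (by omega), if_neg (by omega)]
    have hterm : ∀ k : Fin (w.length + 1),
        (if (i : ℕ) < (k : ℕ) then X ((w.drop (i : ℕ)).take ((k : ℕ) - (i : ℕ)))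
          else if (i : ℕ) = (k : ℕ) then X [] else 0) *
        (if (k : ℕ) < (j : ℕ) then Y ((w.drop (k : ℕ)).take ((j : ℕ) - (k : ℕ)))
          else if (k : ℕ) = (j : ℕ) then Y [] else 0)
        = if (i : ℕ) ≤ (k : ℕ) ∧ (k : ℕ) ≤ (j : ℕ) then
            X ((w.drop (i : ℕ)).take ((k : ℕ) - (i : ℕ))) *
              Y ((w.drop (k : ℕ)).take ((j : ℕ) - (k : ℕ))) else 0 := by
      intro k
      rw [hA, hA]
      by_cases h1 : (i : ℕ) ≤ (k : ℕ) <;> by_cases h2 : (k : ℕ) ≤ (j : ℕ) <;>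
        simp [h1, h2]
    simp_rw [hterm]
    have hij2 : (j : ℕ) ≤ w.length := by omega
    rcases lt_trichotomy (i : ℕ) (j : ℕ) with hij | hij | hij
    · rw [if_pos hij]
      rw [Fin.sum_univ_eq_sum_range (fun k => if (i : ℕ) ≤ k ∧ k ≤ (j : ℕ) then
            X ((w.drop (i : ℕ)).take (k - (i : ℕ))) * Y ((w.drop k).take ((j : ℕ) - k))
          else 0) (w.length + 1)]
      rw [← Finset.sum_filter]
      have hfil : (Finset.range (w.length + 1)).filter
          (fun k => (i : ℕ) ≤ k ∧ k ≤ (j : ℕ)) = Finset.Icc (i : ℕ) (j : ℕ) := by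
        ext k; simp only [Finset.mem_filter, Finset.mem_range, Finset.mem_Icc]; omega
      rw [hfil, ← Finset.Ico_add_one_right_eq_Icc, Finset.sum_Ico_eq_sum_range]
      have hlen : ((w.drop (i : ℕ)).take ((j : ℕ) - (i : ℕ))).length = (j : ℕ) - (i : ℕ) := by
        rw [List.length_take, List.length_drop]; omega
      show NC.mul X Y _ = _
      unfold NC.mul
      rw [hlen]
      have hr : (j : ℕ) + 1 - (i : ℕ) = (j : ℕ) - (i : ℕ) + 1 := by omega
      rw [hr]
      apply Finset.sum_congr rfl
      intro t ht
      rw [Finset.mem_range] at ht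
      have ht' : t ≤ (j : ℕ) - (i : ℕ) := by omega
      have h1 : ((w.drop (i : ℕ)).take ((j : ℕ) - (i : ℕ))).take t = (w.drop (i : ℕ)).take t := by
        rw [List.take_take, min_eq_left ht']
      have h2 : ((w.drop (i : ℕ)).take ((j : ℕ) - (i : ℕ))).drop t
          = (w.drop ((i : ℕ) + t)).take ((j : ℕ) - (i : ℕ) - t) := by
        rw [List.drop_take, List.drop_drop]
      have e1 : (i : ℕ) + t - (i : ℕ) = t := by omega
      have e3 : (j : ℕ) - (i : ℕ) - t = (j : ℕ) - ((i : ℕ) + t) := by omega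
      rw [h1, h2, e1, e3]
    · rw [if_neg (by omega), if_pos hij]
      rw [Fintype.sum_eq_single i]
      · rw [if_pos ⟨le_refl _, le_of_eq hij⟩, Nat.sub_self, List.take_zero, hij,
          Nat.sub_self, List.take_zero]
        simp [NC.mul]
      · intro k hk
        rw [if_neg]
        intro ⟨h1, h2⟩
        exact hk (Fin.ext (by omega))
    · rw [if_neg (by omega), if_neg (by omega)]
      rw [Fintype.sum_eq_zero]
      intro k
      rw [if_neg (by omega)]
end

section
/- Let 𝔤 = ⊕_{k≥1} 𝔤_k be the graded free Lie algebra and Φ_1,…,Φ_J, Ω ∈ 𝔤 such that both S = exp(Φ_J)⋯exp(Φ_1) and exp(Ω) are self-adjoint. If S ≠ exp(Ω), then the minimal grade q such that S = exp(Ω) + Θ + R with 0 ≠ Θ ∈ 𝔤_q and R of grade ≥ q+1, is odd. -/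
open scoped BigOperators

namespace NC

variable {α : Type*}

/-- The adjoint (sign-twisted reversal) operation on series. -/
noncomputable def sg (grade : α → ℕ) (A : List α → ℂ) : List α → ℂ :=
  fun w => (-1 : ℂ) ^ (wgrade grade w + w.length) * A w.reverse

lemma wgrade_take_add_drop (grade : α → ℕ) (w : List α) (i : ℕ) :
    wgrade grade (w.take i) + wgrade grade (w.drop i) = wgrade grade w := by
  unfold wgrade
  rw [← List.sum_append, ← List.map_append, List.take_append_drop]

lemma wgrade_reverse (grade : α → ℕ) (w : List α) :
    wgrade grade w.reverse = wgrade grade w := by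
  unfold wgrade
  rw [List.map_reverse, List.sum_reverse]

lemma sign_split (grade : α → ℕ) (w : List α) (i : ℕ) (hi : i ≤ w.length) :
    ((-1:ℂ)) ^ (wgrade grade (w.take i) + (w.take i).length) *
      ((-1:ℂ)) ^ (wgrade grade (w.drop i) + (w.drop i).length)
      = ((-1:ℂ)) ^ (wgrade grade w + w.length) := by
  rw [← pow_add]
  congr 1
  have h1 := wgrade_take_add_drop grade w i
  have h2 : (w.take i).length = min i w.length := List.length_take
  have h3 : (w.drop i).length = w.length - i := List.length_drop
  omega

lemma one_ne_nil {w : List α} (h : w ≠ []) : one w = 0 := by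
  cases w with
  | nil => exact absurd rfl h
  | cons a l => rfl

lemma sg_one (grade : α → ℕ) : sg grade (one : List α → ℂ) = one := by
  funext w
  cases w with
  | nil => simp [sg, one, wgrade]
  | cons a l =>
    have h1 : (a :: l).reverse ≠ [] := by simp
    have h2 : (a :: l) ≠ ([] : List α) := by simp
    rw [sg, one_ne_nil h1, one_ne_nil h2, mul_zero]

lemma sg_add (grade : α → ℕ) (A B : List α → ℂ) :
    sg grade (A + B) = sg grade A + sg grade B := by
  funext w; simp [sg]; ring

lemma sg_smul (grade : α → ℕ) (c : ℂ) (A : List α → ℂ) :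
    sg grade (c • A) = c • sg grade A := by
  funext w; simp [sg]; ring

lemma sg_zero (grade : α → ℕ) : sg grade (0 : List α → ℂ) = 0 := by
  funext w; simp [sg]

lemma sg_sub (grade : α → ℕ) (A B : List α → ℂ) :
    sg grade (A - B) = sg grade A - sg grade B := by
  funext w; simp [sg]; ring

lemma sg_sum (grade : α → ℕ) {ι : Type*} (s : Finset ι) (f : ι → List α → ℂ) :
    sg grade (∑ k ∈ s, f k) = ∑ k ∈ s, sg grade (f k) := by
  funext w
  simp [sg, Finset.sum_apply, Finset.mul_sum]

lemma sg_mul (grade : α → ℕ) (A B : List α → ℂ) :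
    sg grade (mul A B) = mul (sg grade B) (sg grade A) := by
  funext w
  simp only [sg, mul, List.length_reverse, Finset.mul_sum]
  rw [← Finset.sum_range_reflect]
  refine Finset.sum_congr rfl fun i hi => ?_
  rw [Finset.mem_range, Nat.lt_succ_iff] at hi
  have e1 : w.length + 1 - 1 - i = w.length - i := by omega
  rw [e1, List.reverse_take, List.reverse_drop]
  rw [← sign_split grade w i hi]
  ring

lemma mul_smul_left (c : ℂ) (A B : List α → ℂ) :
    mul (c • A) B = c • mul A B := by
  funext w
  simp [mul, Finset.mul_sum]
  ring_nf

lemma mul_smul_right (c : ℂ) (A B : List α → ℂ) :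
    mul A (c • B) = c • mul A B := by
  funext w
  simp [mul, Finset.mul_sum]
  ring_nf
  refine Finset.sum_congr rfl fun i _ => by ring

lemma mul_one' (A : List α → ℂ) : mul A one = A := by
  funext w
  simp only [mul]
  rw [Finset.sum_eq_single w.length]
  · simp [one]
  · intro i hi hne
    rw [Finset.mem_range, Nat.lt_succ_iff] at hi
    have h : w.drop i ≠ [] := by
      intro h
      have hlen : (w.drop i).length = 0 := by rw [h]; rfl
      rw [List.length_drop] at hlen
      omega
    rw [one_ne_nil h, mul_zero]
  · intro h
    exact absurd (Finset.self_mem_range_succ w.length) h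

lemma one_mul' (A : List α → ℂ) : mul one A = A := by
  funext w
  simp only [mul]
  rw [Finset.sum_eq_single 0]
  · simp [one]
  · intro i hi hne
    rw [Finset.mem_range, Nat.lt_succ_iff] at hi
    have h : w.take i ≠ [] := by
      intro h
      have hlen : (w.take i).length = 0 := by rw [h]; rfl
      rw [List.length_take] at hlen
      omega
    rw [one_ne_nil h, zero_mul]
  · intro h
    exact absurd (Finset.mem_range.2 (Nat.succ_pos _)) h

lemma mul_assoc' (A B C : List α → ℂ) :
    mul (mul A B) C = mul A (mul B C) := by
  funext w
  have L : mul (mul A B) C w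
      = ∑ j ∈ Finset.range (w.length + 1), ∑ i ∈ Finset.range (j + 1),
          A (w.take i) * B ((w.drop i).take (j - i)) * C (w.drop j) := by
    simp only [mul]
    refine Finset.sum_congr rfl fun j hj => ?_
    rw [Finset.mem_range, Nat.lt_succ_iff] at hj
    rw [Finset.sum_mul]
    have hlen : (w.take j).length = j := by
      rw [List.length_take]; omega
    rw [hlen]
    refine Finset.sum_congr rfl fun i hi => ?_
    rw [Finset.mem_range, Nat.lt_succ_iff] at hi
    rw [List.take_take, min_eq_left hi, List.drop_take]
  have R : mul A (mul B C) w
      = ∑ i ∈ Finset.range (w.length + 1), ∑ j ∈ Finset.Ico i (w.length + 1),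
          A (w.take i) * B ((w.drop i).take (j - i)) * C (w.drop j) := by
    simp only [mul]
    refine Finset.sum_congr rfl fun i hi => ?_
    rw [Finset.mem_range, Nat.lt_succ_iff] at hi
    rw [Finset.mul_sum, Finset.sum_Ico_eq_sum_range]
    have hlen : (w.drop i).length = w.length - i := List.length_drop
    have e1 : w.length + 1 - i = w.length - i + 1 := by omega
    rw [hlen, e1]
    refine Finset.sum_congr rfl fun j hj => ?_
    have e2 : i + j - i = j := by omega
    rw [e2, List.drop_drop]
    ring
  rw [L, R]
  have key := Finset.sum_Ico_Ico_comm 0 (w.length + 1)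
    (fun i j => A (w.take i) * B ((w.drop i).take (j - i)) * C (w.drop j))
  simp only [Nat.Ico_zero_eq_range] at key
  rw [key]

lemma pow_succ' (X : List α → ℂ) (n : ℕ) :
    pow X (n + 1) = mul (pow X n) X := by
  induction n with
  | zero => show mul X one = mul one X; rw [mul_one', one_mul']
  | succ n ih =>
    calc pow X (n + 2) = mul X (pow X (n + 1)) := rfl
      _ = mul X (mul (pow X n) X) := by rw [ih]
      _ = mul (mul X (pow X n)) X := (mul_assoc' X (pow X n) X).symm
      _ = mul (pow X (n + 1)) X := rfl

lemma sg_pow (grade : α → ℕ) (X : List α → ℂ) (n : ℕ) :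
    sg grade (pow X n) = pow (sg grade X) n := by
  induction n with
  | zero => exact sg_one grade
  | succ n ih =>
    show sg grade (mul X (pow X n)) = pow (sg grade X) (n + 1)
    rw [sg_mul, ih, pow_succ']

lemma sg_exp (grade : α → ℕ) (X : List α → ℂ) :
    sg grade (exp X) = exp (sg grade X) := by
  funext w
  simp only [sg, exp, List.length_reverse, Finset.mul_sum]
  refine Finset.sum_congr rfl fun k _ => ?_
  have h := congrFun (sg_pow grade X k) w
  simp only [sg] at h
  rw [← h]
  ring

lemma prodExp_append (L : List (List α → ℂ)) (Y : List α → ℂ) :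
    prodExp (L ++ [Y]) = mul (prodExp L) (exp Y) := by
  induction L with
  | nil => show mul (exp Y) one = mul one (exp Y); rw [mul_one', one_mul']
  | cons X L ih =>
    show mul (exp X) (prodExp (L ++ [Y])) = mul (mul (exp X) (prodExp L)) (exp Y)
    rw [ih, mul_assoc']

lemma sg_prodExp (grade : α → ℕ) (L : List (List α → ℂ)) :
    sg grade (prodExp L) = prodExp (L.reverse.map (sg grade)) := by
  induction L with
  | nil => exact sg_one grade
  | cons X L ih =>
    show sg grade (mul (exp X) (prodExp L)) = _
    rw [sg_mul, ih, sg_exp]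
    have : (X :: L).reverse.map (sg grade) = L.reverse.map (sg grade) ++ [sg grade X] := by
      simp
    rw [this, prodExp_append]

lemma sg_scheme (grade : α → ℕ) {J : ℕ} (Φ : Fin J → List α → ℂ) :
    sg grade (scheme Φ) = prodExp (List.ofFn fun j => sg grade (Φ j)) := by
  rw [scheme, sg_prodExp, List.reverse_reverse, List.map_ofFn]
  rfl

lemma mul_support (grade : α → ℕ) {X Y : List α → ℂ} {k l : ℕ}
    (hX : ∀ w, wgrade grade w ≠ k → X w = 0)
    (hY : ∀ w, wgrade grade w ≠ l → Y w = 0) :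
    ∀ w, wgrade grade w ≠ k + l → mul X Y w = 0 := by
  intro w hw
  simp only [mul]
  refine Finset.sum_eq_zero fun i _ => ?_
  by_cases h1 : wgrade grade (w.take i) = k
  · have h2 : wgrade grade (w.drop i) ≠ l := by
      intro h2
      exact hw (by rw [← wgrade_take_add_drop grade w i, h1, h2])
    rw [hY _ h2, mul_zero]
  · rw [hX _ h1, zero_mul]

variable [DecidableEq α]

lemma gen_apply (a : α) (w : List α) :
    gen a w = if w = [a] then (1:ℂ) else 0 := rfl

lemma IsPure.support {grade : α → ℕ} {Z : List α → ℂ} {k : ℕ}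
    (h : IsPure grade Z k) : ∀ w, wgrade grade w ≠ k → Z w = 0 := by
  induction h with
  | gen a =>
    intro w hw
    have hne : w ≠ [a] := by
      rintro rfl
      exact hw (by simp [wgrade])
    simp [gen_apply, hne]
  | @bracket X Y kk ll hX hY ihX ihY =>
    intro w hw
    have hw' : wgrade grade w ≠ ll + kk := by omega
    simp only [lie, Pi.sub_apply]
    rw [mul_support grade ihX ihY w hw, mul_support grade ihY ihX w hw', sub_zero]

lemma IsPure.sg_eq {grade : α → ℕ} {Z : List α → ℂ} {k : ℕ}
    (h : IsPure grade Z k) : sg grade Z = ((-1:ℂ)) ^ (k + 1) • Z := by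
  induction h with
  | gen a =>
    funext w
    by_cases hw : w = [a]
    · subst hw
      simp [sg, gen_apply, wgrade]
    · have hw' : w.reverse ≠ [a] := by
        intro h
        exact hw (by simpa using congrArg List.reverse h)
      simp [sg, gen_apply, hw, hw']
  | @bracket X Y kk ll hX hY ihX ihY =>
    show sg grade (mul X Y - mul Y X) = _
    rw [sg_sub, sg_mul, sg_mul, ihX, ihY, mul_smul_left, mul_smul_right,
      mul_smul_left, mul_smul_right]
    funext w
    simp only [Pi.sub_apply, Pi.smul_apply, smul_eq_mul, lie]
    have hsign : (-1:ℂ) ^ (ll + 1) * (-1:ℂ) ^ (kk + 1) = -(-1:ℂ) ^ (kk + ll + 1) := by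
      rw [← pow_add]
      have : ll + 1 + (kk + 1) = (kk + ll + 1) + 1 := by ring
      rw [this, pow_succ]
      ring
    linear_combination (mul Y X w - mul X Y w) * hsign

lemma gk_sg {grade : α → ℕ} {Z : List α → ℂ} {k : ℕ}
    (h : Z ∈ gk grade k) : sg grade Z = ((-1:ℂ)) ^ (k + 1) • Z := by
  induction h using Submodule.span_induction with
  | mem x hx => exact hx.sg_eq
  | zero => rw [sg_zero, smul_zero]
  | add x y _ _ ihx ihy => rw [sg_add, ihx, ihy, smul_add]
  | smul c x _ ih => rw [sg_smul, ih, smul_comm]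

lemma gk_support {grade : α → ℕ} {Z : List α → ℂ} {k : ℕ}
    (h : Z ∈ gk grade k) : ∀ w, wgrade grade w ≠ k → Z w = 0 := by
  induction h using Submodule.span_induction with
  | mem x hx => exact hx.support
  | zero => intro w _; rfl
  | add x y _ _ ihx ihy =>
    intro w hw
    simp [Pi.add_apply, ihx w hw, ihy w hw]
  | smul c x _ ih =>
    intro w hw
    simp [Pi.smul_apply, ih w hw]

end NC

/-- (Theorem 2 of the paper.)  If both the scheme
`S = exp(Φ_J)⋯exp(Φ₁)` (with `Φ_j = ∑_{k=1}^K X_{j,k}`, `X_{j,k} ∈ 𝔤ₖ`) and `exp(Ω)`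
are self-adjoint, and `S ≠ exp(Ω)`, then the grade `q` of the leading error term
(`S = exp(Ω) + Θ + R` with `0 ≠ Θ ∈ 𝔤_q`, `R ∈ ℛ_{q+1}`) is odd.
The adjoint of `exp(Φ_J)⋯exp(Φ₁)` is `exp(Φ̃₁)⋯exp(Φ̃_J)` with
`Φ̃ = ∑_k (−1)^{k+1} X_k`; self-adjointness of `exp Ω` means `Ω̃ = Ω`. -/
theorem selfadjoint_leading_error_odd_grade {α : Type*} [DecidableEq α] [Fintype α]
    (grade : α → ℕ) (hpos : ∀ a, 0 < grade a)
    (J K : ℕ) (X : Fin J → ℕ → List α → ℂ)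
    (hX : ∀ j k, 1 ≤ k → k ≤ K → X j k ∈ NC.gk grade k)
    (Y : ℕ → List α → ℂ)
    (hY : ∀ k, 1 ≤ k → k ≤ K → Y k ∈ NC.gk grade k)
    -- the scheme is self-adjoint: it equals its adjoint (reversed order, tilded exponents)
    (hSselfadj : NC.scheme (fun j => ∑ k ∈ Finset.Icc 1 K, X j k)
        = NC.prodExp (List.ofFn fun j => ∑ k ∈ Finset.Icc 1 K, ((-1 : ℂ)) ^ (k + 1) • X j k))
    -- `exp Ω` is self-adjoint: `Ω̃ = Ω`
    (hΩselfadj : (∑ k ∈ Finset.Icc 1 K, ((-1 : ℂ)) ^ (k + 1) • Y k)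
        = ∑ k ∈ Finset.Icc 1 K, Y k)
    (hne : NC.scheme (fun j => ∑ k ∈ Finset.Icc 1 K, X j k)
        ≠ NC.exp (∑ k ∈ Finset.Icc 1 K, Y k))
    (q : ℕ) (Θ R : List α → ℂ)
    (hΘ : Θ ∈ NC.gk grade q) (hΘne : Θ ≠ 0) (hR : R ∈ NC.Rset grade (q + 1))
    (heq : NC.scheme (fun j => ∑ k ∈ Finset.Icc 1 K, X j k)
        = NC.exp (∑ k ∈ Finset.Icc 1 K, Y k) + Θ + R) :
    Odd q := by
  set Φ : Fin J → List α → ℂ := fun j => ∑ k ∈ Finset.Icc 1 K, X j k with hΦ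
  have hsgΦ : ∀ j, NC.sg grade (Φ j)
      = ∑ k ∈ Finset.Icc 1 K, ((-1 : ℂ)) ^ (k + 1) • X j k := by
    intro j
    rw [hΦ]
    rw [NC.sg_sum]
    refine Finset.sum_congr rfl fun k hk => ?_
    rw [Finset.mem_Icc] at hk
    exact NC.gk_sg (hX j k hk.1 hk.2)
  have hS : NC.sg grade (NC.scheme Φ) = NC.scheme Φ := by
    rw [NC.sg_scheme, hSselfadj]
    exact congrArg _ (congrArg List.ofFn (funext hsgΦ))
  set Ω : List α → ℂ := ∑ k ∈ Finset.Icc 1 K, Y k with hΩdef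
  have hΩ : NC.sg grade Ω = Ω := by
    rw [hΩdef, NC.sg_sum]
    calc ∑ k ∈ Finset.Icc 1 K, NC.sg grade (Y k)
        = ∑ k ∈ Finset.Icc 1 K, ((-1 : ℂ)) ^ (k + 1) • Y k := by
          refine Finset.sum_congr rfl fun k hk => ?_
          rw [Finset.mem_Icc] at hk
          exact NC.gk_sg (hY k hk.1 hk.2)
      _ = ∑ k ∈ Finset.Icc 1 K, Y k := hΩselfadj
  have key : NC.exp Ω + Θ + R
      = NC.exp Ω + ((-1 : ℂ)) ^ (q + 1) • Θ + NC.sg grade R := by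
    calc NC.exp Ω + Θ + R = NC.scheme Φ := heq.symm
      _ = NC.sg grade (NC.scheme Φ) := hS.symm
      _ = NC.sg grade (NC.exp Ω + Θ + R) := by rw [heq]
      _ = NC.sg grade (NC.exp Ω) + NC.sg grade Θ + NC.sg grade R := by
          rw [NC.sg_add, NC.sg_add]
      _ = NC.exp Ω + ((-1 : ℂ)) ^ (q + 1) • Θ + NC.sg grade R := by
          rw [NC.sg_exp, hΩ, NC.gk_sg hΘ]
  rcases Nat.even_or_odd q with hq | hq
  · exfalso
    apply hΘne
    have hsgn : ((-1 : ℂ)) ^ (q + 1) = -1 := by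
      rw [pow_succ, hq.neg_one_pow, one_mul]
    funext w
    show Θ w = 0
    by_cases hw : NC.wgrade grade w = q
    · have h1 := congrFun key w
      have hRw : R w = 0 := hR w (by omega)
      have hRrev : R w.reverse = 0 :=
        hR w.reverse (by rw [NC.wgrade_reverse]; omega)
      have hsgR : NC.sg grade R w = 0 := by
        simp [NC.sg, hRrev]
      simp only [Pi.add_apply, Pi.smul_apply, smul_eq_mul, hsgn, hRw, hsgR] at h1
      linear_combination h1 / 2
    · exact NC.gk_support hΘ w hw
  · exact hq
end

section
/- For a Lyndon word w with right standard factorization w = uv (v the longest proper right factor of w that is Lyndon), u is also a Lyndon word. -/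
open scoped BigOperators

section Helpers
variable {α : Type*} [LinearOrder α]

private lemma lex_append_left_iff (s x y : List α) : s ++ x < s ++ y ↔ x < y := by
  constructor
  · intro h
    induction s with
    | nil => exact h
    | cons a s ih => exact ih (((List.cons_lt_cons_iff.1 h).resolve_left (lt_irrefl a)).2)
  · intro h
    exact List.Lex.append_left _ h s

private lemma lex_of_append_lex : ∀ (u s c d : List α), s.length ≤ u.length → ¬ s <+: u →
    u ++ c < s ++ d → u < s
  | u, [], _, _, _, hpre, _ => absurd (List.nil_prefix) hpre
  | [], a :: s, _, _, hlen, _, _ => absurd hlen (by simp)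
  | b :: u, a :: s, c, d, hlen, hpre, h => by
    cases h with
    | rel hr => exact List.Lex.rel hr
    | cons h' =>
      refine List.Lex.cons (lex_of_append_lex u s c d (by simpa using hlen) ?_ h')
      exact fun hp => hpre (List.cons_prefix_cons.2 ⟨rfl, hp⟩)

private lemma lyndon_lt_suffix (x s : List α) (hx : NC.Lyndon x) (hs : s <:+ x)
    (hne : s ≠ x) (h0 : s ≠ []) : x < s := by
  obtain ⟨t, ht⟩ := hs
  have hlen : t.length + s.length = x.length := by rw [← ht, List.length_append]
  have hsp : 0 < s.length := List.length_pos_iff.2 h0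
  have htp : 0 < t.length := by
    rcases Nat.eq_zero_or_pos t.length with h | h
    · exact absurd (by rw [← ht, List.length_eq_zero_iff.1 h, List.nil_append]) hne
    · exact h
  have hdrop : x.drop t.length = s := by rw [← ht, List.drop_left]
  have := hx.2 t.length htp (by omega)
  rwa [hdrop] at this

private lemma v_min (w v : List α) (hw : NC.Lyndon w) (hvL : NC.Lyndon v)
    (hv : v ≠ []) (hvw : v <:+ w) (hvne : v ≠ w)
    (hlongest : ∀ v' : List α, v' <:+ w → v' ≠ w → v' ≠ [] → NC.Lyndon v' →
      v'.length ≤ v.length)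
    (z : List α) (hz : z <:+ w) (hzw : z ≠ w) (hz0 : z ≠ []) : ¬ z < v := by
  intro hzv
  classical
  set S : Finset (List α) := w.tails.toFinset.filter (fun s => s ≠ [] ∧ s ≠ w) with hS
  have hmemS : ∀ s : List α, s ∈ S ↔ (s <:+ w ∧ s ≠ [] ∧ s ≠ w) := by
    intro s
    simp [hS, List.mem_tails, and_assoc]
  have hzS : z ∈ S := (hmemS z).2 ⟨hz, hz0, hzw⟩
  obtain ⟨m, hmS, hmin⟩ := Finset.exists_min_image S id ⟨z, hzS⟩
  rw [hmemS] at hmS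
  obtain ⟨hmw, hm0, hmne⟩ := hmS
  have hmlen : m.length ≤ w.length := hmw.length_le
  have hmLyndon : NC.Lyndon m := by
    refine ⟨hm0, fun j hj0 hjm => ?_⟩
    have hsuffix : m.drop j <:+ w := (List.drop_suffix j m).trans hmw
    have hlen : (m.drop j).length < m.length := by rw [List.length_drop]; omega
    have hne1 : m.drop j ≠ [] := by
      apply List.ne_nil_of_length_pos
      rw [List.length_drop]; omega
    have hnew : m.drop j ≠ w := by
      intro h
      rw [h] at hlen; omega
    have hmem : m.drop j ∈ S := (hmemS _).2 ⟨hsuffix, hne1, hnew⟩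
    have hle : m ≤ m.drop j := hmin _ hmem
    exact lt_of_le_of_ne hle (fun he => by rw [← he] at hlen; omega)
  have hmv : m.length ≤ v.length := hlongest m hmw hmne hm0 hmLyndon
  have hmsv : m <:+ v := List.suffix_of_suffix_length_le hmw hvw hmv
  rcases Nat.lt_or_ge m.length v.length with hlt | hge
  · have hvm : v < m := lyndon_lt_suffix v m hvL hmsv
      (fun h => by rw [h] at hlt; omega) hm0
    have : v < v := lt_of_lt_of_le hvm (le_trans (hmin z hzS) (le_of_lt hzv))
    exact lt_irrefl v this
  · have : m = v := hmsv.eq_of_length (le_antisymm hmv hge)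
    rw [this] at hmin
    exact absurd hzv (not_lt.2 (hmin z hzS))

end Helpers

/-- If `w = uv` is the right standard factorization of a Lyndon word `w`
(`u, v` nonempty, `v` the longest proper right factor of `w` that is Lyndon),
then `u` is also a Lyndon word. -/
theorem left_factor_of_std_factorization_isLyndon {α : Type*} [LinearOrder α]
    (w u v : List α) (hw : NC.Lyndon w)
    (hsplit : w = u ++ v) (hu : u ≠ []) (hv : v ≠ []) (hvLyndon : NC.Lyndon v)
    (hlongest : ∀ v' : List α, v' <:+ w → v' ≠ w → v' ≠ [] → NC.Lyndon v' →
      v'.length ≤ v.length) :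
    NC.Lyndon u := by
  have hup : 0 < u.length := List.length_pos_iff.2 hu
  have hvp : 0 < v.length := List.length_pos_iff.2 hv
  have hwlen : w.length = u.length + v.length := by rw [hsplit, List.length_append]
  refine ⟨hu, fun i hi0 hiu => ?_⟩
  set s := u.drop i with hsdef
  have hslen : s.length = u.length - i := List.length_drop
  have hsne : s ≠ [] := List.ne_nil_of_length_pos (by omega)
  have hwdrop : w.drop i = s ++ v := by
    rw [hsplit, List.drop_append]
    have h0 : i - u.length = 0 := by omega
    rw [h0, List.drop_zero]
  have hlt : u ++ v < s ++ v := by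
    have h := hw.2 i hi0 (by omega)
    rwa [hwdrop, hsplit] at h
  by_cases hpre : s <+: u
  · exfalso
    obtain ⟨t, ht⟩ := hpre
    have htlen : s.length + t.length = u.length := by rw [← ht, List.length_append]
    have htne : t ≠ [] := List.ne_nil_of_length_pos (by omega)
    have htv : t ++ v < v := by
      have h2 : s ++ (t ++ v) < s ++ v := by
        rw [← List.append_assoc, ht]; exact hlt
      exact (lex_append_left_iff s (t ++ v) v).1 h2
    have hsuf : t ++ v <:+ w := ⟨s, by rw [← List.append_assoc, ht, hsplit]⟩
    have htvne : t ++ v ≠ w := by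
      intro h
      have := congrArg List.length h
      rw [List.length_append] at this
      omega
    have htv0 : t ++ v ≠ [] := by simp [htne]
    exact v_min w v hw hvLyndon hv ⟨u, hsplit.symm⟩
      (by intro h; have := congrArg List.length h; omega)
      hlongest (t ++ v) hsuf htvne htv0 htv
  · exact lex_of_append_lex u s v v (by omega) hpre hlt
end

section
/- The map sending the word A B^{d_1−1} A B^{d_2−1} ⋯ A B^{d_ℓ−1} over the two-letter alphabet {A, B} (with A < B) to the word A_{d_1} A_{d_2} ⋯ A_{d_ℓ} over the alphabet {A_1, A_2, …} (with A_1 < A_2 < ⋯) restricts to a bijection between Lyndon words over {A,B} of length q that begin with A, and Lyndon words over {A_1, A_2, …} of weight q (where A_k has weight k); moreover this bijection preserves lexicographic order. -/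
open scoped BigOperators

/-- The word `A B^{d₁−1} A B^{d₂−1} ⋯ A B^{d_ℓ−1}` over `{A, B}` (with `A = false < B = true`)
associated to the word `A_{d₁} A_{d₂} ⋯ A_{d_ℓ}` over `{A₁, A₂, …}` (modelled as `ℕ+`). -/
def blocks (d : List ℕ+) : List Bool :=
  (d.map fun k => false :: List.replicate ((k : ℕ) - 1) true).flatten

/-- The weight (grade) of a word over `{A₁, A₂, …}`, where `A_k` has weight `k`. -/
def pweight (d : List ℕ+) : ℕ := (d.map fun k => (k : ℕ)).sum

section Aux

lemma blocks_cons (k : ℕ+) (d : List ℕ+) :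
    blocks (k :: d) = (false :: List.replicate ((k : ℕ) - 1) true) ++ blocks d := by
  simp [blocks]

@[simp] lemma blocks_nil : blocks ([] : List ℕ+) = [] := rfl

lemma pweight_cons (k : ℕ+) (d : List ℕ+) : pweight (k :: d) = (k : ℕ) + pweight d := by
  simp [pweight]

@[simp] lemma pweight_nil : pweight ([] : List ℕ+) = 0 := rfl

lemma length_blocks (d : List ℕ+) : (blocks d).length = pweight d := by
  induction d with
  | nil => rfl
  | cons k d ih =>
      have hk : 1 ≤ (k : ℕ) := k.one_le
      simp [blocks_cons, pweight_cons, ih]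
      omega

lemma blocks_eq_nil_iff (d : List ℕ+) : blocks d = [] ↔ d = [] := by
  cases d with
  | nil => simp
  | cons k d => simp [blocks_cons]

lemma one_le_pweight {d : List ℕ+} (hd : d ≠ []) : 1 ≤ pweight d := by
  cases d with
  | nil => exact absurd rfl hd
  | cons k d => have : 1 ≤ (k:ℕ) := k.one_le; simp [pweight_cons]; omega

lemma head?_blocks {d : List ℕ+} (hd : d ≠ []) : (blocks d).head? = some false := by
  cases d with
  | nil => exact absurd rfl hd
  | cons k d => simp [blocks_cons]

/-- Any `blocks d` is lexicographically smaller than any word starting with `true`. -/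
lemma blocks_lex_true (d : List ℕ+) (t : List Bool) :
    List.Lex (· < ·) (blocks d) (true :: t) := by
  cases d with
  | nil => exact List.Lex.nil
  | cons k d =>
      rw [blocks_cons]
      exact List.Lex.rel (by decide)

lemma blocks_lex_mono : ∀ {d e : List ℕ+}, List.Lex (· < ·) d e →
    List.Lex (· < ·) (blocks d) (blocks e) := by
  intro d e h
  induction h with
  | nil =>
      rw [blocks_cons]
      exact List.Lex.nil
  | cons h ih =>
      simp only [blocks_cons]
      exact List.Lex.append_left _ ih _
  | rel h =>
      rename_i a l₁ b l₂
      have hab : (a : ℕ) < (b : ℕ) := h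
      have ha : 1 ≤ (a : ℕ) := a.one_le
      rw [blocks_cons, blocks_cons]
      have hsplit : List.replicate ((b : ℕ) - 1) true
          = List.replicate ((a : ℕ) - 1) true ++ true :: List.replicate ((b : ℕ) - (a : ℕ) - 1) true := by
        rw [show true :: List.replicate ((b:ℕ) - (a:ℕ) - 1) true
              = List.replicate ((b:ℕ) - (a:ℕ)) true by
            rw [← List.replicate_succ]; congr 1; omega]
        rw [← List.replicate_add]
        congr 1; omega
      simp only [hsplit, List.cons_append, List.append_assoc]
      refine List.Lex.cons ?_
      exact List.Lex.append_left _ (blocks_lex_true _ _) _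

lemma list_lt_iff_lex {α : Type*} [LinearOrder α] (l l' : List α) :
    l < l' ↔ List.Lex (· < ·) l l' := Iff.rfl

lemma blocks_lt_iff (d e : List ℕ+) : d < e ↔ blocks d < blocks e := by
  rw [list_lt_iff_lex, list_lt_iff_lex]
  constructor
  · exact fun h => blocks_lex_mono h
  · intro h
    rcases lt_trichotomy d e with h' | h' | h'
    · exact (list_lt_iff_lex d e).mp h'
    · subst h'; exact absurd h (by rw [← list_lt_iff_lex]; exact lt_irrefl _)
    · have h2 := blocks_lex_mono ((list_lt_iff_lex e d).mp h')
      rw [← list_lt_iff_lex] at h h2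
      exact absurd h2 (asymm h)

lemma blocks_injective : Function.Injective blocks := by
  intro d e h
  rcases lt_trichotomy d e with h' | h' | h'
  · have := (blocks_lt_iff d e).mp h'
    rw [h] at this
    exact absurd this (lt_irrefl _)
  · exact h'
  · have := (blocks_lt_iff e d).mp h'
    rw [h] at this
    exact absurd this (lt_irrefl _)

lemma pweight_take_add_drop (d : List ℕ+) (j : ℕ) :
    pweight (d.take j) + pweight (d.drop j) = pweight d := by
  induction d generalizing j with
  | nil => simp
  | cons k d ih =>
      cases j with
      | zero => simp
      | succ j =>
          simp only [List.take_succ_cons, List.drop_succ_cons, pweight_cons, ← ih j]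
          omega

lemma blocks_drop (d : List ℕ+) (j : ℕ) :
    blocks (d.drop j) = (blocks d).drop (pweight (d.take j)) := by
  induction d generalizing j with
  | nil => simp
  | cons k d ih =>
      cases j with
      | zero => simp
      | succ j =>
          have hk : 1 ≤ (k : ℕ) := k.one_le
          rw [List.drop_succ_cons, List.take_succ_cons, pweight_cons, blocks_cons,
            List.drop_append,
            List.drop_eq_nil_of_le (as := false :: List.replicate ((k:ℕ) - 1) true)
              (by simp only [List.length_cons, List.length_replicate]; omega),
            List.nil_append, ih j]
          congr 1
          simp only [List.length_cons, List.length_replicate]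
          omega

/-- Inside-block positions start with `true`; otherwise we are at a block boundary. -/
lemma drop_blocks_char (d : List ℕ+) : ∀ i, 0 < i → i < pweight d →
    ((blocks d).drop i).head? = some true ∨
      ∃ j, 0 < j ∧ j < d.length ∧ i = pweight (d.take j) := by
  induction d with
  | nil => intro i h1 h2; simp at h2
  | cons k d ih =>
      intro i h1 h2
      have hk : 1 ≤ (k : ℕ) := k.one_le
      rw [pweight_cons] at h2
      rw [blocks_cons]
      by_cases hik : i < (k : ℕ)
      · left
        rw [List.drop_append_of_le_length (by simp; omega)]
        rw [List.head?_append_of_ne_nil]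
        · cases i with
          | zero => omega
          | succ i =>
              rw [List.drop_succ_cons, List.drop_replicate, List.head?_replicate,
                if_neg (by omega)]
        · cases i with
          | zero => omega
          | succ i =>
              rw [List.drop_succ_cons, List.drop_replicate]
              simp only [ne_eq, List.replicate_eq_nil_iff]
              omega
      · -- i ≥ k
        push_neg at hik
        rw [List.drop_append, List.drop_eq_nil_of_le (by simp; omega),
          List.nil_append]
        simp only [List.length_cons, List.length_replicate]
        have harith : i - (1 + ((k:ℕ) - 1)) = i - (k:ℕ) := by omega
        by_cases hik' : i = (k : ℕ)
        · right
          refine ⟨1, one_pos, ?_, ?_⟩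
          · have : 0 < pweight d := by omega
            have : d ≠ [] := by
              intro h; subst h; simp at this
            simpa using List.length_pos_iff.mpr this
          · simp [pweight_cons, hik']
        · rcases ih (i - (k:ℕ)) (by omega) (by omega) with h | ⟨j, hj1, hj2, hj3⟩
          · left
            rw [show ((k:ℕ) - 1 + 1) = (k:ℕ) by omega]
            exact h
          · right
            refine ⟨j + 1, by omega, by simpa using Nat.succ_lt_succ hj2, ?_⟩
            rw [List.take_succ_cons, pweight_cons]
            omega

/-- Parse a word over `{A,B}` starting with `A = false` back into blocks. -/
def parseBlocks : List Bool → List ℕ+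
  | [] => []
  | false :: w =>
      (⟨(w.takeWhile id).length + 1, Nat.succ_pos _⟩ : ℕ+) :: parseBlocks (w.dropWhile id)
  | true :: w => parseBlocks w
termination_by w => w.length
decreasing_by
  · have := (List.dropWhile_suffix (l := w) id).length_le
    simp; omega
  · simp

lemma blocks_parseBlocks : ∀ w : List Bool, w.head? ≠ some true →
    blocks (parseBlocks w) = w := by
  intro w
  induction w using parseBlocks.induct with
  | case1 => intro _; simp [parseBlocks]
  | case2 w ih =>
      intro _
      rw [parseBlocks]
      erw [blocks_cons]
      have htw : List.takeWhile id w = List.replicate (List.takeWhile id w).length true := by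
        apply List.eq_replicate_of_mem
        intro b hb
        have := List.mem_takeWhile_imp hb
        simpa using this
      have hdw : (List.dropWhile id w).head? ≠ some true := by
        cases hdd : List.dropWhile id w with
        | nil => simp
        | cons b t =>
            have hlen : 0 < (List.dropWhile id w).length := by rw [hdd]; simp
            have hb := List.dropWhile_get_zero_not (p := id) w hlen
            simp only [hdd, List.get_eq_getElem, List.getElem_cons_zero, id] at hb
            simp [hb]
      rw [ih hdw]
      rw [PNat.mk_coe, Nat.add_sub_cancel]
      rw [← htw]
      rw [List.cons_append, List.takeWhile_append_dropWhile]
  | case3 w ih =>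
      intro h
      exact absurd rfl h

end Aux

/-- The map `A_{d₁}⋯A_{d_ℓ} ↦ A B^{d₁−1} ⋯ A B^{d_ℓ−1}` restricts to a
bijection between Lyndon words over `{A₁, A₂, …}` of weight `q` and Lyndon words over
`{A, B}` of length `q` beginning with `A`, and this bijection preserves lexicographic
order. -/
theorem lyndon_blocks_bijection (q : ℕ) :
    (∀ d : List ℕ+, NC.Lyndon d → pweight d = q →
      NC.Lyndon (blocks d) ∧ (blocks d).length = q ∧ (blocks d).head? = some false) ∧
    (∀ d e : List ℕ+, NC.Lyndon d → NC.Lyndon e → pweight d = q → pweight e = q →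
      blocks d = blocks e → d = e) ∧
    (∀ w : List Bool, NC.Lyndon w → w.length = q → w.head? = some false →
      ∃ d : List ℕ+, NC.Lyndon d ∧ pweight d = q ∧ blocks d = w) ∧
    (∀ d e : List ℕ+, NC.Lyndon d → NC.Lyndon e → pweight d = q → pweight e = q →
      (d < e ↔ blocks d < blocks e)) := by
  refine ⟨?_, ?_, ?_, ?_⟩
  · intro d hd hq
    obtain ⟨hdne, hdlt⟩ := hd
    refine ⟨⟨?_, ?_⟩, ?_, ?_⟩
    · rw [ne_eq, blocks_eq_nil_iff]; exact hdne
    · intro i hi hlen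
      rw [length_blocks] at hlen
      rcases drop_blocks_char d i hi hlen with h | ⟨j, hj0, hjlen, hij⟩
      · obtain ⟨t, ht⟩ : ∃ t, (blocks d).drop i = true :: t := by
          cases hcase : (blocks d).drop i with
          | nil => rw [hcase] at h; simp at h
          | cons b t =>
              rw [hcase] at h
              simp only [List.head?_cons, Option.some.injEq] at h
              exact ⟨t, by rw [h]⟩
        rw [ht, list_lt_iff_lex]
        exact blocks_lex_true d t
      · have h1 := hdlt j hj0 hjlen
        have h2 := (blocks_lt_iff _ _).mp h1
        rw [blocks_drop, ← hij] at h2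
        exact h2
    · rw [length_blocks]; exact hq
    · exact head?_blocks hdne
  · intro d e _ _ _ _ h
    exact blocks_injective h
  · intro w hw hlen hhead
    have hne : w.head? ≠ some true := by rw [hhead]; simp
    have hbp := blocks_parseBlocks w hne
    set d := parseBlocks w with hdd
    have hdne : d ≠ [] := by
      intro h0
      rw [h0, blocks_nil] at hbp
      exact hw.1 hbp.symm
    refine ⟨d, ⟨hdne, ?_⟩, ?_, hbp⟩
    · intro j hj0 hjlen
      rw [blocks_lt_iff, blocks_drop, hbp]
      apply hw.2
      · have hne' : d.take j ≠ [] := by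
          simp only [ne_eq, List.take_eq_nil_iff]
          push_neg
          exact ⟨by omega, hdne⟩
        exact one_le_pweight hne'
      · have hne'' : d.drop j ≠ [] := by
          simp only [ne_eq, List.drop_eq_nil_iff]
          omega
        have h1 := one_le_pweight hne''
        have h2 := pweight_take_add_drop d j
        rw [← hbp, length_blocks]
        omega
    · rw [← length_blocks, hbp]
      exact hlen
  · intro d e _ _ _ _
    exact blocks_lt_iff d e
end

section
/- Let P_k denote the shifted Legendre polynomials on [0,1], P_k(x) = (−1)^k ∑_{j=0}^k C(k,j) C(k+j,j) (−1)^j x^j. Then for indices d_1, …, d_ℓ ≥ 1, the iterated integral ∫_0^1 ∫_0^{x_1} ⋯ ∫_0^{x_{ℓ−1}} P_{d_1−1}(x_1) ⋯ P_{d_ℓ−1}(x_ℓ) dx_ℓ ⋯ dx_1 equals ∑_{(k_1,…,k_ℓ), 1 ≤ k_j ≤ d_j} ∏_{j=1}^{ℓ} [(−1)^{d_j+k_j} C(d_j−1, k_j−1) C(d_j+k_j−2, k_j−1)] / (∑_{i=j}^{ℓ} k_i). -/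
open scoped BigOperators

/-- The shifted Legendre polynomial on `[0,1]`:
`P_k(x) = (−1)^k ∑_{j=0}^k C(k,j) C(k+j,j) (−1)^j x^j`. -/
noncomputable def legP (k : ℕ) (x : ℝ) : ℝ :=
  (-1 : ℝ) ^ k *
    ∑ j ∈ Finset.range (k + 1),
      (Nat.choose k j : ℝ) * (Nat.choose (k + j) j : ℝ) * (-1 : ℝ) ^ j * x ^ j

/-- The iterated simplex integral
`∫_0^t ∫_0^{x₁} ⋯ P_{d₁−1}(x₁) P_{d₂−1}(x₂) ⋯ dx`. -/
noncomputable def legIter : List ℕ → ℝ → ℝ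
  | [], _ => 1
  | d :: ds, t => ∫ x in (0 : ℝ)..t, legP (d - 1) x * legIter ds x

private lemma ici_succ_map {n : ℕ} (j : Fin n) :
    Finset.Ici (j.succ) = (Finset.Ici j).map (Fin.succEmb n) := by
  ext i
  simp only [Finset.mem_Ici, Finset.mem_map, Fin.succEmb, Function.Embedding.coeFn_mk]
  constructor
  · intro hi
    cases i using Fin.cases with
    | zero => exact absurd hi (by simp [Fin.le_def])
    | succ i' => exact ⟨i', Fin.succ_le_succ_iff.mp hi, rfl⟩
  · rintro ⟨i', hi', rfl⟩
    exact Fin.succ_le_succ_iff.mpr hi'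

private lemma ici_zero_eq_univ {n : ℕ} :
    Finset.Ici (0 : Fin (n + 1)) = Finset.univ := by
  ext i; simp [Fin.zero_le]

private lemma legIter_formula (ℓ : ℕ) : ∀ (d : Fin ℓ → ℕ), (∀ j, 1 ≤ d j) → ∀ t : ℝ,
    legIter (List.ofFn d) t =
      ∑ k : (∀ j : Fin ℓ, Fin (d j)),
        (∏ j : Fin ℓ,
          ((-1 : ℝ) ^ (d j + ((k j : ℕ) + 1)) *
              (Nat.choose (d j - 1) (k j : ℕ) : ℝ) *
              (Nat.choose (d j + (k j : ℕ) - 1) (k j : ℕ) : ℝ)) /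
            ((∑ i ∈ Finset.Ici j, ((k i : ℕ) + 1) : ℕ) : ℝ)) *
          t ^ (∑ i : Fin ℓ, ((k i : ℕ) + 1)) := by
  induction ℓ with
  | zero =>
    intro d hd t
    simp [legIter, List.ofFn_zero]
  | succ ℓ ih =>
    intro d hd t
    set n := d 0 with hn
    have hn1 : n - 1 + 1 = n := Nat.succ_pred_eq_of_pos (hd 0)
    -- coefficients of legP (n-1)
    set b : ℕ → ℝ := fun j =>
      (-1 : ℝ) ^ (n - 1) * ((Nat.choose (n - 1) j : ℝ) * (Nat.choose (n - 1 + j) j : ℝ)) *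
        (-1 : ℝ) ^ j with hb
    have hP : ∀ x : ℝ, legP (n - 1) x = ∑ j ∈ Finset.range n, b j * x ^ j := by
      intro x
      rw [legP, Finset.mul_sum, hn1]
      refine Finset.sum_congr rfl fun j _ => by rw [hb]; ring
    -- tail data
    set C : (∀ j : Fin ℓ, Fin (d j.succ)) → ℝ := fun k =>
      ∏ j : Fin ℓ,
        ((-1 : ℝ) ^ (d j.succ + ((k j : ℕ) + 1)) *
            (Nat.choose (d j.succ - 1) (k j : ℕ) : ℝ) *
            (Nat.choose (d j.succ + (k j : ℕ) - 1) (k j : ℕ) : ℝ)) /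
          ((∑ i ∈ Finset.Ici j, ((k i : ℕ) + 1) : ℕ) : ℝ) with hC
    set N : (∀ j : Fin ℓ, Fin (d j.succ)) → ℕ := fun k => ∑ i : Fin ℓ, ((k i : ℕ) + 1) with hN
    have hI : ∀ x : ℝ, legIter (List.ofFn fun i : Fin ℓ => d i.succ) x
        = ∑ k', C k' * x ^ N k' := fun x => ih _ (fun j => hd j.succ) x
    rw [List.ofFn_succ]
    have hcons : legIter (d 0 :: List.ofFn fun i : Fin ℓ => d i.succ) t
        = ∫ x in (0:ℝ)..t, legP (d 0 - 1) x * legIter (List.ofFn fun i : Fin ℓ => d i.succ) x :=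
      rfl
    rw [hcons]
    -- compute the integral
    have hInt : (∫ x in (0:ℝ)..t,
          legP (d 0 - 1) x * legIter (List.ofFn fun i : Fin ℓ => d i.succ) x)
        = ∑ j ∈ Finset.range n, ∑ k', (b j * C k') *
            (t ^ (j + N k' + 1) / ((j : ℝ) + (N k' : ℝ) + 1)) := by
      have h1 : (∫ x in (0:ℝ)..t,
            legP (d 0 - 1) x * legIter (List.ofFn fun i : Fin ℓ => d i.succ) x)
          = ∫ x in (0:ℝ)..t, ∑ j ∈ Finset.range n, ∑ k', (b j * C k') * x ^ (j + N k') := by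
        refine intervalIntegral.integral_congr fun x _ => ?_
        rw [← hn, hP, hI, Finset.sum_mul_sum]
        refine Finset.sum_congr rfl fun j _ => Finset.sum_congr rfl fun k' _ => ?_
        rw [pow_add]; ring
      rw [h1, intervalIntegral.integral_finset_sum]
      · refine Finset.sum_congr rfl fun j _ => ?_
        rw [intervalIntegral.integral_finset_sum]
        · refine Finset.sum_congr rfl fun k' _ => ?_
          rw [intervalIntegral.integral_const_mul, integral_pow]
          have : (0:ℝ) ^ (j + N k' + 1) = 0 := by
            exact zero_pow (by omega)
          rw [this]
          push_cast
          ring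
        · intro k' _
          exact ((continuous_const.mul (continuous_pow _)).intervalIntegrable _ _)
      · intro j _
        exact ((continuous_finset_sum _ fun k' _ =>
          continuous_const.mul (continuous_pow _)).intervalIntegrable _ _)
    rw [hInt]
    -- compute the RHS via consEquiv
    rw [← Equiv.sum_comp (Fin.consEquiv (fun j : Fin (ℓ+1) => Fin (d j)))]
    rw [Fintype.sum_prod_type]
    rw [← Fin.sum_univ_eq_sum_range
      (fun j => ∑ k', (b j * C k') * (t ^ (j + N k' + 1) / ((j : ℝ) + (N k' : ℝ) + 1))) n]
    refine Finset.sum_congr rfl fun k0 _ => Finset.sum_congr rfl fun k' _ => ?_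
    -- per-term identity
    -- abbreviate the cons tuple
    set K : ∀ j : Fin (ℓ+1), Fin (d j) := Fin.cons k0 k' with hK
    have hequiv : (Fin.consEquiv (fun j : Fin (ℓ+1) => Fin (d j))) (k0, k') = K := rfl
    rw [hequiv]
    have hK0 : ∀ i : Fin ℓ, K i.succ = k' i := fun i => rfl
    have hKz : K 0 = k0 := rfl
    -- Ici sums
    have hIci0 : (∑ i ∈ Finset.Ici (0 : Fin (ℓ+1)), ((K i : ℕ) + 1))
        = ((k0 : ℕ) + 1) + N k' := by
      rw [ici_zero_eq_univ, Fin.sum_univ_succ, hKz, hN]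
      simp [hK0]
    have hIcis : ∀ j : Fin ℓ, (∑ i ∈ Finset.Ici j.succ, ((K i : ℕ) + 1))
        = ∑ i ∈ Finset.Ici j, ((k' i : ℕ) + 1) := by
      intro j
      rw [ici_succ_map, Finset.sum_map]
      refine Finset.sum_congr rfl fun i _ => by rw [show (Fin.succEmb ℓ) i = i.succ from rfl, hK0]
    have hExp : (∑ i : Fin (ℓ+1), ((K i : ℕ) + 1)) = ((k0 : ℕ) + 1) + N k' := by
      rw [Fin.sum_univ_succ, hKz, hN]; simp [hK0]
    -- split the product
    rw [Fin.prod_univ_succ]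
    have hTail : (∏ j : Fin ℓ,
        ((-1 : ℝ) ^ (d j.succ + ((K j.succ : ℕ) + 1)) *
            (Nat.choose (d j.succ - 1) (K j.succ : ℕ) : ℝ) *
            (Nat.choose (d j.succ + (K j.succ : ℕ) - 1) (K j.succ : ℕ) : ℝ)) /
          ((∑ i ∈ Finset.Ici j.succ, ((K i : ℕ) + 1) : ℕ) : ℝ)) = C k' := by
      rw [hC]
      refine Finset.prod_congr rfl fun j _ => by rw [hK0, hIcis]
    rw [hTail, hIci0, hExp, hKz]
    -- head coefficient
    have hb0 : (-1 : ℝ) ^ (d 0 + ((k0 : ℕ) + 1)) *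
          (Nat.choose (d 0 - 1) (k0 : ℕ) : ℝ) *
          (Nat.choose (d 0 + (k0 : ℕ) - 1) (k0 : ℕ) : ℝ) = b (k0 : ℕ) := by
      rw [hb, ← hn]
      have h2 : n + (k0 : ℕ) - 1 = n - 1 + (k0 : ℕ) := by omega
      have h3 : (-1 : ℝ) ^ (n + ((k0 : ℕ) + 1)) = (-1 : ℝ) ^ (n - 1) * (-1 : ℝ) ^ (k0 : ℕ) := by
        rw [← pow_add]
        have : n + ((k0 : ℕ) + 1) = (n - 1 + (k0 : ℕ)) + 2 := by omega
        rw [this, pow_add]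
        simp
      rw [h2, h3]; ring
    rw [hb0]
    have hexp2 : (k0 : ℕ) + N k' + 1 = ((k0 : ℕ) + 1) + N k' := by omega
    rw [hexp2]
    push_cast
    ring

/-- For indices `d₁, …, d_ℓ ≥ 1`, the iterated simplex integral
`∫_0^1 ∫_0^{x₁} ⋯ ∫_0^{x_{ℓ−1}} P_{d₁−1}(x₁) ⋯ P_{d_ℓ−1}(x_ℓ) dx_ℓ ⋯ dx₁` equals
`∑_{1 ≤ k_j ≤ d_j} ∏_j (−1)^{d_j+k_j} C(d_j−1,k_j−1) C(d_j+k_j−2,k_j−1) / (∑_{i≥j} k_i)`.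
(Here `k_j` is represented as `(k j : ℕ) + 1` with `k j : Fin (d j)`.) -/
theorem legendre_iterated_integral_formula (ℓ : ℕ) (d : Fin ℓ → ℕ)
    (hd : ∀ j, 1 ≤ d j) :
    legIter (List.ofFn d) 1 =
      ∑ k : (∀ j : Fin ℓ, Fin (d j)), ∏ j : Fin ℓ,
        ((-1 : ℝ) ^ (d j + ((k j : ℕ) + 1)) *
            (Nat.choose (d j - 1) (k j : ℕ) : ℝ) *
            (Nat.choose (d j + (k j : ℕ) - 1) (k j : ℕ) : ℝ)) /
          ((∑ i ∈ Finset.Ici j, ((k i : ℕ) + 1) : ℕ) : ℝ) := by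
  rw [legIter_formula ℓ d hd 1]
  simp
end

section
/- Let P_k be the shifted Legendre polynomials on [0,1]. If one index d_j exceeds the sum of the remaining indices by at least 2, i.e., d_j ≥ 2 + ∑_{i≠j} d_i, then the iterated integral ∫_0^1 ∫_0^{x_1} ⋯ ∫_0^{x_{ℓ−1}} P_{d_1−1}(x_1) ⋯ P_{d_ℓ−1}(x_ℓ) dx_ℓ ⋯ dx_1 vanishes. -/
open scoped BigOperators

open Polynomial Finset

noncomputable def T (p : ℝ[X]) : ℝ[X] :=
  ∑ n ∈ range (p.natDegree + 1), C (p.coeff n / (n + 1)) * X ^ (n + 1)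

lemma T_deriv (p : ℝ[X]) : derivative (T p) = p := by
  rw [T, map_sum]
  have : ∀ n ∈ range (p.natDegree + 1),
      derivative (C (p.coeff n / (n+1)) * X ^ (n+1)) = C (p.coeff n) * X ^ n := by
    intro n _
    rw [derivative_C_mul, derivative_X_pow, ← mul_assoc, ← C_mul]
    norm_num
    rw [← C_eq_natCast, ← C_1, ← C_add, ← C_mul]
    congr 1
    field_simp
  rw [Finset.sum_congr rfl this]
  conv_rhs => rw [p.as_sum_range' (p.natDegree + 1) (Nat.lt_succ_self _)]
  simp [C_mul_X_pow_eq_monomial]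

lemma T_eval_zero (p : ℝ[X]) : (T p).eval 0 = 0 := by
  simp [T, eval_finset_sum]

lemma T_natDegree (p : ℝ[X]) : (T p).natDegree ≤ p.natDegree + 1 := by
  apply Polynomial.natDegree_sum_le_of_forall_le
  intro n hn
  apply (natDegree_C_mul_le _ _).trans
  simp only [natDegree_X_pow]
  exact Nat.add_le_add_right (Nat.lt_succ_iff.mp (mem_range.mp hn)) 1

lemma integral_eval (p : ℝ[X]) (t : ℝ) : ∫ x in (0:ℝ)..t, p.eval x = (T p).eval t := by
  rw [intervalIntegral.integral_eq_sub_of_hasDerivAt (f := fun x => (T p).eval x)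
      (fun x _ => by simpa [T_deriv] using (T p).hasDerivAt x)
      ((p.continuous.intervalIntegrable _ _))]
  · rw [T_eval_zero]; ring

lemma findiff : ∀ k : ℕ, ∀ q : ℝ[X], q.natDegree < k →
    ∑ j ∈ range (k+1), (-1:ℝ)^j * (k.choose j : ℝ) * q.eval (j : ℝ) = 0 := by
  intro k
  induction k with
  | zero => intro q hq; exact absurd hq (Nat.not_lt_zero _)
  | succ k ih =>
    intro q hq
    set Δ : ℝ[X] := q.comp (X + C 1) - q with hΔdef
    have hS : ∑ j ∈ range (k+1+1), (-1:ℝ)^j * ((k+1).choose j : ℝ) * q.eval (j:ℝ)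
        = -∑ j ∈ range (k+1), (-1:ℝ)^j * (k.choose j : ℝ) * Δ.eval (j:ℝ) := by
      have hB : ∑ j ∈ range (k+1), (-1:ℝ)^j * (k.choose (j+1) : ℝ) * q.eval ((j:ℝ)+1)
          = q.eval 0 - ∑ j ∈ range (k+1), (-1:ℝ)^j * (k.choose j : ℝ) * q.eval (j:ℝ) := by
        have h1 : ∑ j ∈ range (k+2), (-1:ℝ)^j * (k.choose j : ℝ) * q.eval (j:ℝ)
            = ∑ j ∈ range (k+1), (-1:ℝ)^j * (k.choose j : ℝ) * q.eval (j:ℝ) := by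
          rw [Finset.sum_range_succ, Nat.choose_succ_self]
          simp
        have h2 : ∑ j ∈ range (k+2), (-1:ℝ)^j * (k.choose j : ℝ) * q.eval (j:ℝ)
            = (∑ j ∈ range (k+1), (-1:ℝ)^(j+1) * (k.choose (j+1) : ℝ) * q.eval ((j:ℝ)+1))
              + q.eval 0 := by
          rw [Finset.sum_range_succ']
          push_cast
          ring_nf
          simp
        rw [h2] at h1
        have : ∀ j ∈ range (k+1), (-1:ℝ)^(j+1) * (k.choose (j+1) : ℝ) * q.eval ((j:ℝ)+1)
            = -((-1:ℝ)^j * (k.choose (j+1) : ℝ) * q.eval ((j:ℝ)+1)) := by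
          intro j _; ring
        rw [Finset.sum_congr rfl this, Finset.sum_neg_distrib] at h1
        linarith [h1]
      have h3 : ∑ j ∈ range (k+1+1), (-1:ℝ)^j * ((k+1).choose j : ℝ) * q.eval (j:ℝ)
          = (∑ j ∈ range (k+1), -((-1:ℝ)^j * ((k.choose j : ℝ) + (k.choose (j+1) : ℝ))
              * q.eval ((j:ℝ)+1))) + q.eval 0 := by
        rw [Finset.sum_range_succ']
        simp only [Nat.choose_succ_succ, Nat.succ_eq_add_one, Nat.choose_zero_right]
        push_cast
        rw [pow_zero, one_mul, one_mul]
        congr 1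
        apply Finset.sum_congr rfl
        intro x _
        ring
      rw [h3]
      have h4 : ∀ j ∈ range (k+1), Δ.eval (j:ℝ) = q.eval ((j:ℝ)+1) - q.eval (j:ℝ) := by
        intro j _
        simp [hΔdef, eval_comp]
      rw [show (∑ j ∈ range (k+1), (-1:ℝ)^j * (k.choose j : ℝ) * Δ.eval (j:ℝ))
          = ∑ j ∈ range (k+1), ((-1:ℝ)^j * (k.choose j : ℝ) * q.eval ((j:ℝ)+1)
              - (-1:ℝ)^j * (k.choose j : ℝ) * q.eval (j:ℝ)) from
        Finset.sum_congr rfl (fun j hj => by rw [h4 j hj]; ring)]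
      rw [Finset.sum_sub_distrib]
      have expand : ∀ j ∈ range (k+1), -((-1:ℝ)^j * ((k.choose j : ℝ) + (k.choose (j+1) : ℝ))
              * q.eval ((j:ℝ)+1))
          = -((-1:ℝ)^j * (k.choose j : ℝ) * q.eval ((j:ℝ)+1))
            - ((-1:ℝ)^j * (k.choose (j+1) : ℝ) * q.eval ((j:ℝ)+1)) := by
        intro j _; ring
      rw [Finset.sum_congr rfl expand, Finset.sum_sub_distrib, Finset.sum_neg_distrib, hB]
      ring
    rw [hS]
    rcases eq_or_ne Δ 0 with h0 | h0
    · simp [h0]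
    · have hqne : q ≠ 0 := by rintro rfl; simp [hΔdef] at h0
      have hdq : q.natDegree ≠ 0 := by
        intro hc
        obtain ⟨c, rfl⟩ := Polynomial.natDegree_eq_zero.mp hc
        simp [hΔdef] at h0
      have hX1 : (X + C (1:ℝ)).natDegree = 1 := natDegree_X_add_C 1
      have hndc : (q.comp (X + C (1:ℝ))).natDegree = q.natDegree := by
        rw [natDegree_comp, hX1, mul_one]
      have hlc : (q.comp (X + C (1:ℝ))).leadingCoeff = q.leadingCoeff := by
        rw [leadingCoeff_comp (by rw [hX1]; exact one_ne_zero), leadingCoeff_X_add_C, one_pow,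
          mul_one]
      have hcompne : q.comp (X + C (1:ℝ)) ≠ 0 := by
        intro hc
        apply hqne
        rw [← leadingCoeff_eq_zero, ← hlc, hc, leadingCoeff_zero]
      have hdeg : (q.comp (X + C (1:ℝ))).degree = q.degree := by
        rw [degree_eq_natDegree hcompne, degree_eq_natDegree hqne, hndc]
      have hlt : Δ.degree < q.degree := by
        rw [hΔdef, ← hdeg]
        exact degree_sub_lt hdeg hcompne hlc
      have hnd : Δ.natDegree < q.natDegree := natDegree_lt_natDegree h0 hlt
      have : Δ.natDegree < k := lt_of_lt_of_le hnd (Nat.lt_succ_iff.mp hq)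
      rw [ih Δ this, neg_zero]

lemma prod_choose (k j : ℕ) :
    ((k+j).choose j : ℝ) * (k.factorial : ℝ) = ∏ i ∈ range k, ((j : ℝ) + i + 1) := by
  have h1 : (k+j).descFactorial k = k.factorial * (k+j).choose k :=
    Nat.descFactorial_eq_factorial_mul_choose _ _
  have h2 : (k+j).choose k = (k+j).choose j := Nat.choose_symm_add
  have h3 : (k+j).descFactorial k = ∏ i ∈ range k, (k + j - i) :=
    Nat.descFactorial_eq_prod_range _ _
  have h4 : ∏ i ∈ range k, (k + j - i) = ∏ i ∈ range k, (j + i + 1) := by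
    rw [← Finset.prod_range_reflect (fun i => j + i + 1) k]
    apply Finset.prod_congr rfl
    intro i hi
    have : i < k := Finset.mem_range.mp hi
    omega
  have : k.factorial * (k+j).choose j = ∏ i ∈ range k, (j + i + 1) := by
    rw [← h2, ← h1, h3, h4]
  calc ((k+j).choose j : ℝ) * (k.factorial : ℝ)
      = ((k.factorial * (k+j).choose j : ℕ) : ℝ) := by push_cast; ring
    _ = _ := by rw [this]; push_cast; ring

lemma key_comb (k m : ℕ) (h : m < k) :
    ∑ j ∈ range (k+1), (-1:ℝ)^j * (k.choose j : ℝ) * ((((k+j).choose j : ℝ)) / ((m:ℝ)+j+1)) = 0 := by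
  set Q : ℝ[X] := Polynomial.C ((k.factorial : ℝ)⁻¹) * ∏ i ∈ (range k).erase m, (X + C ((i:ℝ)+1))
    with hQ
  have hev : ∀ j : ℕ, Q.eval (j : ℝ) = (((k+j).choose j : ℝ)) / ((m:ℝ)+j+1) := by
    intro j
    have hmem : m ∈ range k := Finset.mem_range.mpr h
    have hprod : ((j:ℝ) + m + 1) * ∏ i ∈ (range k).erase m, ((j:ℝ) + i + 1)
        = ∏ i ∈ range k, ((j:ℝ) + i + 1) := by
      exact Finset.mul_prod_erase (range k) (fun i : ℕ => (j:ℝ) + i + 1) hmem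
    have hfac : (0:ℝ) < k.factorial := by positivity
    have hden : ((j:ℝ) + m + 1) ≠ 0 := by positivity
    rw [hQ]
    simp only [eval_mul, eval_C, eval_prod, eval_add, eval_X]
    rw [← prod_choose] at hprod
    have hre : ∏ i ∈ (range k).erase m, ((j:ℝ) + ((i:ℝ) + 1))
        = ∏ i ∈ (range k).erase m, ((j:ℝ) + (i:ℝ) + 1) :=
      Finset.prod_congr rfl (fun i _ => by ring)
    rw [hre]
    field_simp
    linear_combination hprod
  have hdeg : Q.natDegree < k := by
    have h1 : Q.natDegree ≤ 0 + ∑ i ∈ (range k).erase m, (X + C ((i:ℝ)+1)).natDegree := by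
      rw [hQ]
      exact (natDegree_mul_le).trans (by
        gcongr
        · exact le_of_eq (natDegree_C _)
        · exact natDegree_prod_le _ _)
    have h2 : ∑ i ∈ (range k).erase m, (X + C ((i:ℝ)+1)).natDegree
        = ((range k).erase m).card := by
      rw [Finset.card_eq_sum_ones]
      exact Finset.sum_congr rfl (fun i _ => natDegree_X_add_C _)
    have h3 : ((range k).erase m).card = k - 1 := by
      rw [Finset.card_erase_of_mem (Finset.mem_range.mpr h), Finset.card_range]
    omega
  have := findiff k Q hdeg
  rw [← this]
  exact Finset.sum_congr rfl (fun j _ => by rw [hev j])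

noncomputable def legPpoly (k : ℕ) : ℝ[X] :=
  C ((-1:ℝ)^k) *
    ∑ j ∈ range (k+1), C ((k.choose j : ℝ) * ((k+j).choose j : ℝ) * (-1:ℝ)^j) * X ^ j

lemma legPpoly_eval (k : ℕ) (x : ℝ) : (legPpoly k).eval x = legP k x := by
  simp [legPpoly, legP, eval_finset_sum]

lemma legPpoly_natDegree (k : ℕ) : (legPpoly k).natDegree ≤ k := by
  apply (natDegree_mul_le).trans
  rw [natDegree_C, zero_add]
  apply Polynomial.natDegree_sum_le_of_forall_le
  intro j hj
  exact (natDegree_C_mul_le _ _).trans (by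
    rw [natDegree_X_pow]; exact Nat.lt_succ_iff.mp (mem_range.mp hj))

noncomputable def intg (p : ℝ[X]) : ℝ := ∫ x in (0:ℝ)..1, p.eval x

lemma intg_eq_T (p : ℝ[X]) : intg p = (T p).eval 1 := integral_eval p 1

lemma intg_sum {α : Type*} (s : Finset α) (f : α → ℝ[X]) :
    intg (∑ i ∈ s, f i) = ∑ i ∈ s, intg (f i) := by
  unfold intg
  rw [← intervalIntegral.integral_finset_sum (fun i _ => ((f i).continuous.intervalIntegrable _ _))]
  congr 1
  ext x
  simp [eval_finset_sum]

lemma intg_C_mul (a : ℝ) (p : ℝ[X]) : intg (C a * p) = a * intg p := by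
  unfold intg
  simp only [eval_mul, eval_C]
  exact intervalIntegral.integral_const_mul _ _

lemma intg_add (p q : ℝ[X]) : intg (p + q) = intg p + intg q := by
  unfold intg
  simp only [eval_add]
  exact intervalIntegral.integral_add (p.continuous.intervalIntegrable _ _)
    (q.continuous.intervalIntegrable _ _)

lemma intg_sub (p q : ℝ[X]) : intg (p - q) = intg p - intg q := by
  unfold intg
  simp only [eval_sub]
  exact intervalIntegral.integral_sub (p.continuous.intervalIntegrable _ _)
    (q.continuous.intervalIntegrable _ _)

lemma intg_derivative (s : ℝ[X]) : intg (derivative s) = s.eval 1 - s.eval 0 := by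
  unfold intg
  rw [intervalIntegral.integral_eq_sub_of_hasDerivAt (f := fun x => s.eval x)
    (fun x _ => s.hasDerivAt x) ((derivative s).continuous.intervalIntegrable _ _)]

lemma intg_parts (p q : ℝ[X]) : intg (p * T q) = intg p * intg q - intg (q * T p) := by
  have h : derivative (T p * T q) = p * T q + q * T p := by
    rw [derivative_mul, T_deriv, T_deriv]; ring
  have h2 := intg_derivative (T p * T q)
  rw [h, intg_add, eval_mul, eval_mul, T_eval_zero, ← intg_eq_T, ← intg_eq_T] at h2
  rw [zero_mul, sub_zero] at h2
  linarith

lemma intg_pow (n : ℕ) : intg (X ^ n : ℝ[X]) = 1 / (n + 1) := by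
  unfold intg
  simp only [eval_pow, eval_X]
  rw [integral_pow]
  norm_num

lemma intg_legP_pow (k m : ℕ) (h : m < k) : intg (legPpoly k * X ^ m) = 0 := by
  have hpoly : legPpoly k * X ^ m
      = ∑ j ∈ range (k+1),
          C ((-1:ℝ)^k * ((k.choose j : ℝ) * ((k+j).choose j : ℝ) * (-1:ℝ)^j)) * X ^ (j + m) := by
    rw [legPpoly, Finset.mul_sum, Finset.sum_mul]
    apply Finset.sum_congr rfl
    intro j _
    simp only [C_mul, pow_add]
    ring
  rw [hpoly, intg_sum]
  have : ∀ j ∈ range (k+1), intg (C ((-1:ℝ)^k * ((k.choose j : ℝ) * ((k+j).choose j : ℝ)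
        * (-1:ℝ)^j)) * X ^ (j + m))
      = (-1:ℝ)^k * ((-1:ℝ)^j * (k.choose j : ℝ) * (((k+j).choose j : ℝ) / ((m:ℝ)+j+1))) := by
    intro j _
    rw [intg_C_mul, intg_pow]
    push_cast
    ring
  rw [Finset.sum_congr rfl this, ← Finset.mul_sum, key_comb k m h, mul_zero]

lemma intg_legP_orth (k : ℕ) (q : ℝ[X]) (hq : q.natDegree < k) : intg (legPpoly k * q) = 0 := by
  have hrep := q.as_sum_range' k hq
  rw [hrep, Finset.mul_sum, intg_sum]
  apply Finset.sum_eq_zero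
  intro i hi
  have : legPpoly k * monomial i (q.coeff i) = C (q.coeff i) * (legPpoly k * X ^ i) := by
    rw [← C_mul_X_pow_eq_monomial]; ring
  rw [this, intg_C_mul, intg_legP_pow k i (mem_range.mp hi), mul_zero]

noncomputable def PL : List ℕ → ℝ[X]
  | [] => 1
  | d :: ds => T (legPpoly (d-1) * PL ds)

lemma legIter_eq (ds : List ℕ) (t : ℝ) : legIter ds t = (PL ds).eval t := by
  induction ds generalizing t with
  | nil => simp [legIter, PL]
  | cons d ds ih =>
    show (∫ x in (0:ℝ)..t, legP (d-1) x * legIter ds x) = _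
    rw [PL, ← integral_eval]
    apply intervalIntegral.integral_congr
    intro x _
    simp [legPpoly_eval, ih]

lemma PL_natDegree (ds : List ℕ) (h : ∀ d ∈ ds, 1 ≤ d) : (PL ds).natDegree ≤ ds.sum := by
  induction ds with
  | nil => simp [PL]
  | cons d ds ih =>
    have hd : 1 ≤ d := h d List.mem_cons_self
    have h1 : (legPpoly (d-1) * PL ds).natDegree ≤ (d-1) + ds.sum :=
      natDegree_mul_le.trans (Nat.add_le_add (legPpoly_natDegree _)
        (ih (fun x hx => h x (List.mem_cons_of_mem _ hx))))
    have := (T_natDegree (legPpoly (d-1) * PL ds)).trans (Nat.add_le_add_right h1 1)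
    rw [PL]
    refine this.trans ?_
    rw [List.sum_cons]
    omega

noncomputable def PP : List ℕ → ℝ[X] → ℝ[X]
  | [], r => r
  | a :: A, r => T (legPpoly (a-1) * PP A r)

lemma PL_append (A L : List ℕ) : PL (A ++ L) = PP A (PL L) := by
  induction A with
  | nil => simp [PP]
  | cons a A ih => rw [List.cons_append, PL, PP, ih]

lemma main_claim (A : List ℕ) (hA : ∀ a ∈ A, 1 ≤ a) :
    ∃ F : ℝ[X], ∃ G : ℝ[X] → ℝ[X],
      F.natDegree ≤ A.sum ∧ (∀ p, (G p).natDegree ≤ p.natDegree + A.sum + 1) ∧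
      (∀ q, (PP A (T q)).eval 1 = intg (F * q)) ∧
      (∀ p q, intg (p * PP A (T q)) = intg (G p * q)) := by
  induction A with
  | nil =>
    refine ⟨1, fun p => C (intg p) - T p, by simp, ?_, ?_, ?_⟩
    · intro p
      refine (natDegree_sub_le _ _).trans ?_
      simp only [natDegree_C, List.sum_nil]
      exact max_le (by omega) (by have := T_natDegree p; omega)
    · intro q
      show (T q).eval 1 = _
      rw [← intg_eq_T, one_mul]
    · intro p q
      show intg (p * T q) = _
      rw [intg_parts]
      have h1 : (C (intg p) - T p) * q = C (intg p) * q - T p * q := by ring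
      rw [h1, intg_sub, intg_C_mul, mul_comm q (T p)]
  | cons a A ih =>
    obtain ⟨F', G', hF', hG', hFev, hGev⟩ := ih (fun x hx => hA x (List.mem_cons_of_mem _ hx))
    have ha : 1 ≤ a := hA a List.mem_cons_self
    have hlegP : (legPpoly (a-1)).natDegree ≤ a - 1 := legPpoly_natDegree _
    refine ⟨G' (legPpoly (a-1)),
      fun p => C (intg p) * G' (legPpoly (a-1)) - G' (legPpoly (a-1) * T p), ?_, ?_, ?_, ?_⟩
    · have := hG' (legPpoly (a-1))
      rw [List.sum_cons]
      omega
    · intro p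
      refine (natDegree_sub_le _ _).trans ?_
      have h1 : (C (intg p) * G' (legPpoly (a-1))).natDegree ≤ (a-1) + A.sum + 1 := by
        refine natDegree_mul_le.trans ?_
        have := hG' (legPpoly (a-1))
        rw [natDegree_C]
        omega
      have h2 : (G' (legPpoly (a-1) * T p)).natDegree ≤ (a-1) + (p.natDegree + 1) + A.sum + 1 := by
        refine (hG' _).trans ?_
        have h3 : (legPpoly (a-1) * T p).natDegree ≤ (a-1) + (p.natDegree + 1) :=
          natDegree_mul_le.trans (Nat.add_le_add hlegP (T_natDegree p))
        omega
      rw [List.sum_cons]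
      exact max_le (by omega) (by omega)
    · intro q
      show (T (legPpoly (a-1) * PP A (T q))).eval 1 = _
      rw [← intg_eq_T, hGev]
    · intro p q
      show intg (p * T (legPpoly (a-1) * PP A (T q))) = _
      rw [intg_parts]
      have h1 : legPpoly (a-1) * PP A (T q) * T p
          = (legPpoly (a-1) * T p) * PP A (T q) := by ring
      rw [h1, hGev, hGev]
      have h2 : (C (intg p) * G' (legPpoly (a-1)) - G' (legPpoly (a-1) * T p)) * q
          = C (intg p) * (G' (legPpoly (a-1)) * q) - G' (legPpoly (a-1) * T p) * q := by ring
      rw [h2, intg_sub, intg_C_mul]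

lemma list_version (A B : List ℕ) (b : ℕ) (hA : ∀ a ∈ A, 1 ≤ a) (hB : ∀ a ∈ B, 1 ≤ a)
    (hb2 : A.sum + B.sum + 2 ≤ b) : legIter (A ++ b :: B) 1 = 0 := by
  rw [legIter_eq, PL_append]
  have hbB : PL (b :: B) = T (legPpoly (b-1) * PL B) := rfl
  rw [hbB]
  obtain ⟨F, G, hF, _, hFev, _⟩ := main_claim A hA
  rw [hFev (legPpoly (b-1) * PL B)]
  have h1 : F * (legPpoly (b-1) * PL B) = legPpoly (b-1) * (F * PL B) := by ring
  rw [h1]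
  apply intg_legP_orth
  have h2 : (F * PL B).natDegree ≤ A.sum + B.sum :=
    natDegree_mul_le.trans (Nat.add_le_add hF (PL_natDegree B hB))
  omega

/-- If one index `d_j` exceeds the sum of the remaining indices by at
least 2, then the iterated simplex integral of `P_{d₁−1}(x₁) ⋯ P_{d_ℓ−1}(x_ℓ)` vanishes. -/
theorem legendre_iterated_integral_vanishes (ℓ : ℕ) (d : Fin ℓ → ℕ)
    (hd : ∀ j, 1 ≤ d j)
    (hbig : ∃ j : Fin ℓ, 2 + ∑ i ∈ Finset.univ.erase j, d i ≤ d j) :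
    legIter (List.ofFn d) 1 = 0 := by
  obtain ⟨j, hj⟩ := hbig
  set L := List.ofFn d with hLdef
  have hjlen : (j : ℕ) < L.length := by simp [hLdef, j.isLt]
  set A := L.take j with hAdef
  set B := L.drop (j + 1) with hBdef
  have hsplit : L = A ++ d j :: B := by
    conv_lhs => rw [← List.take_append_drop (j : ℕ) L]
    congr 1
    rw [List.drop_eq_getElem_cons hjlen, hBdef]
    congr 1
    simp [hLdef]
  have hmem : ∀ a ∈ L, 1 ≤ a := by
    intro a ha
    rw [hLdef, List.mem_ofFn] at ha
    obtain ⟨i, rfl⟩ := ha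
    exact hd i
  have hA1 : ∀ a ∈ A, 1 ≤ a := fun a ha => hmem a (List.take_subset _ _ ha)
  have hB1 : ∀ a ∈ B, 1 ≤ a := fun a ha => hmem a (List.drop_subset _ _ ha)
  have hsum : A.sum + B.sum + d j = ∑ i, d i := by
    have h1 : L.sum = ∑ i, d i := by rw [hLdef, List.sum_ofFn]
    rw [hsplit] at h1
    simp only [List.sum_append, List.sum_cons] at h1
    omega
  have herase : d j + ∑ i ∈ Finset.univ.erase j, d i = ∑ i, d i :=
    Finset.add_sum_erase _ _ (Finset.mem_univ j)
  have hb2 : A.sum + B.sum + 2 ≤ d j := by omega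
  rw [hsplit]
  exact list_version A B (d j) hA1 hB1 hb2
end

section
/- Let 𝒜 = {A_1, …, A_K} with grade(A_k) = k, and suppose a word w of grade ≤ p contains a letter A_d with d ≥ p/2 + 1. Then some index d_j in w = A_{d_1}⋯A_{d_ℓ} satisfies d_j ≥ 2 + ∑_{i≠j} d_i; consequently the coefficient of w in the exact solution operator exp(Ω) vanishes, where this coefficient equals the iterated simplex integral of the product of shifted Legendre polynomials P_{d_1−1}(x_1)⋯P_{d_ℓ−1}(x_ℓ). -/
open scoped BigOperators

namespace LegAux

open Polynomial

/-- Polynomial antiderivative with zero constant term. -/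
noncomputable def intP (q : ℝ[X]) : ℝ[X] := q.sum fun n a => C (a / (n+1)) * X^(n+1)

/-- The linear functional `q ↦ ∫_0^1 q`. -/
noncomputable def Jf (q : ℝ[X]) : ℝ := (intP q).eval 1

/-- The shifted Legendre polynomial, as a `Polynomial`. -/
noncomputable def legPpoly (k : ℕ) : ℝ[X] :=
  C ((-1:ℝ)^k) * ∑ j ∈ Finset.range (k + 1),
      C ((Nat.choose k j : ℝ) * (Nat.choose (k + j) j : ℝ) * (-1 : ℝ) ^ j) * X ^ j

lemma eval_intP (q : ℝ[X]) (t : ℝ) : (intP q).eval t = ∫ x in (0:ℝ)..t, q.eval x := by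
  have : ∀ x : ℝ, q.eval x = ∑ n ∈ q.support, q.coeff n * x ^ n := by
    intro x; rw [eval_eq_sum, Polynomial.sum_def]
  simp_rw [this]
  rw [intervalIntegral.integral_finset_sum]
  · rw [intP, Polynomial.sum_def, eval_finset_sum]
    refine Finset.sum_congr rfl fun n _ => ?_
    rw [intervalIntegral.integral_const_mul, integral_pow]
    have : (n:ℝ) + 1 ≠ 0 := by positivity
    simp only [eval_mul, eval_C, eval_pow, eval_X, zero_pow (Nat.succ_ne_zero n)]
    field_simp
    rw [sub_zero]
  · intro n _
    exact ((continuous_const.mul (continuous_pow n)).intervalIntegrable _ _)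

lemma Jf_eq (q : ℝ[X]) : Jf q = ∫ x in (0:ℝ)..1, q.eval x := eval_intP q 1

lemma derivative_intP (q : ℝ[X]) : derivative (intP q) = q := by
  rw [intP, Polynomial.sum_def, map_sum]
  have : ∀ n ∈ q.support, derivative (C (q.coeff n / (n+1)) * X^(n+1))
      = C (q.coeff n) * X ^ n := by
    intro n _
    have h : ((n:ℝ) + 1) ≠ 0 := by positivity
    rw [derivative_C_mul_X_pow, Nat.add_sub_cancel]
    push_cast
    rw [div_mul_cancel₀ _ h]
  rw [Finset.sum_congr rfl this]
  conv_rhs => rw [← sum_C_mul_X_pow_eq q]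
  rw [Polynomial.sum_def]

lemma natDegree_intP (q : ℝ[X]) : (intP q).natDegree ≤ q.natDegree + 1 := by
  refine (Polynomial.natDegree_sum_le _ _).trans ?_
  rw [Finset.fold_max_le]
  refine ⟨Nat.zero_le _, fun n hn => ?_⟩
  refine (natDegree_mul_le).trans ?_
  simp only [natDegree_C, natDegree_X_pow, zero_add]
  exact Nat.succ_le_succ (Polynomial.le_natDegree_of_mem_supp n hn)

lemma intP_eval_zero (q : ℝ[X]) : (intP q).eval 0 = 0 := by
  rw [eval_intP, intervalIntegral.integral_same]

lemma Jf_derivative (Q : ℝ[X]) : Jf (derivative Q) = Q.eval 1 - Q.eval 0 := by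
  rw [Jf_eq]
  exact intervalIntegral.integral_eq_sub_of_hasDerivAt
    (fun x _ => Q.hasDerivAt x) ((Q.derivative.continuous).intervalIntegrable _ _)

lemma Jf_add (p q : ℝ[X]) : Jf (p + q) = Jf p + Jf q := by
  simp_rw [Jf_eq, eval_add]
  rw [intervalIntegral.integral_add (p.continuous.intervalIntegrable _ _)
    (q.continuous.intervalIntegrable _ _)]

lemma Jf_sub (p q : ℝ[X]) : Jf (p - q) = Jf p - Jf q := by
  simp_rw [Jf_eq, eval_sub]
  rw [intervalIntegral.integral_sub (p.continuous.intervalIntegrable _ _)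
    (q.continuous.intervalIntegrable _ _)]

lemma Jf_sum {ι : Type*} (s : Finset ι) (f : ι → ℝ[X]) :
    Jf (∑ i ∈ s, f i) = ∑ i ∈ s, Jf (f i) := by
  simp_rw [Jf_eq, eval_finset_sum]
  rw [intervalIntegral.integral_finset_sum]
  intro i _
  exact ((f i).continuous).intervalIntegrable _ _

lemma Jf_C_mul (c : ℝ) (q : ℝ[X]) : Jf (C c * q) = c * Jf q := by
  simp_rw [Jf_eq, eval_mul, eval_C]
  rw [intervalIntegral.integral_const_mul]

lemma Jf_monomial (c : ℝ) (n : ℕ) : Jf (C c * X ^ n) = c / ((n:ℝ) + 1) := by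
  rw [Jf_C_mul, Jf_eq]
  simp_rw [eval_pow, eval_X]
  rw [integral_pow]
  norm_num
  ring

lemma Jf_parts (u h : ℝ[X]) : Jf (u * intP h) = Jf ((C (Jf u) - intP u) * h) := by
  have hd : derivative (intP u * intP h) = u * intP h + intP u * h := by
    rw [derivative_mul, derivative_intP, derivative_intP]
  have h1 : Jf (u * intP h) + Jf (intP u * h) = Jf u * Jf h := by
    rw [← Jf_add, ← hd, Jf_derivative, eval_mul, eval_mul, intP_eval_zero, Jf, Jf, zero_mul,
      sub_zero]
  rw [sub_mul, Jf_sub, Jf_C_mul]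
  linarith [h1]

lemma fwd_poly_zero : ∀ (k : ℕ) (P : ℝ[X]), P.degree < k →
    (fwdDiff (1:ℝ))^[k] (fun x : ℝ => P.eval x) = 0 := by
  intro k
  induction k with
  | zero =>
    intro P hP
    rw [Nat.cast_zero, Nat.WithBot.lt_zero_iff, degree_eq_bot] at hP
    subst hP
    funext x; simp
  | succ k ih =>
    intro P hP
    rw [Function.iterate_succ_apply]
    have h1 : fwdDiff (1:ℝ) (fun x : ℝ => P.eval x) = fun x : ℝ => (taylor 1 P - P).eval x := by
      funext x
      simp [fwdDiff, taylor_eval]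
    rw [h1]
    apply ih
    by_cases h0 : P = 0
    · subst h0
      rw [map_zero, sub_self, degree_zero]
      exact WithBot.bot_lt_coe k
    by_cases hnd : P.natDegree = 0
    · obtain ⟨a, rfl⟩ := natDegree_eq_zero.mp hnd
      rw [taylor_C, sub_self, degree_zero]
      exact WithBot.bot_lt_coe k
    · have ht0 : taylor 1 P ≠ 0 := fun h => h0 (taylor_injective 1 (by simpa using h))
      have hdeg : (taylor 1 P).degree = P.degree := by
        rw [degree_eq_natDegree ht0, degree_eq_natDegree h0, natDegree_taylor]
      have hlc : (taylor 1 P).leadingCoeff = P.leadingCoeff := by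
        rw [taylor_apply, leadingCoeff_comp (by rw [natDegree_X_add_C]; norm_num)]
        rw [leadingCoeff_X_add_C, one_pow, mul_one]
      have := degree_sub_lt hdeg ht0 hlc
      rw [hdeg] at this
      refine lt_of_lt_of_le this ?_
      rw [degree_eq_natDegree h0] at hP ⊢
      rw [Nat.cast_lt] at hP
      exact_mod_cast Nat.lt_succ_iff.mp (by exact_mod_cast hP)

lemma alt_sum_zero (k : ℕ) (P : ℝ[X]) (hP : P.degree < k) :
    ∑ j ∈ Finset.range (k+1), (-1:ℝ)^j * (k.choose j) * P.eval (j:ℝ) = 0 := by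
  have h := fwdDiff_iter_eq_sum_shift (1:ℝ) (fun x : ℝ => P.eval x) k 0
  rw [fwd_poly_zero k P hP] at h
  have h' : (0:ℝ) = ∑ j ∈ Finset.range (k+1), ((-1:ℝ)^(k-j) * (k.choose j)) * P.eval (j:ℝ) := by
    simpa [zsmul_eq_mul, nsmul_eq_mul] using h
  have heq : ∑ j ∈ Finset.range (k+1), (-1:ℝ)^j * (k.choose j) * P.eval (j:ℝ)
      = (-1:ℝ)^k * ∑ j ∈ Finset.range (k+1), ((-1:ℝ)^(k-j) * (k.choose j)) * P.eval (j:ℝ) := by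
    rw [Finset.mul_sum]
    refine Finset.sum_congr rfl fun j hj => ?_
    have hj' : j ≤ k := Nat.lt_succ_iff.mp (Finset.mem_range.mp hj)
    have hpow : (-1:ℝ)^j = (-1:ℝ)^k * (-1:ℝ)^(k-j) := by
      have h2 : (-1:ℝ)^(k-j) * (-1:ℝ)^j = (-1:ℝ)^k := by
        rw [← pow_add, Nat.sub_add_cancel hj']
      have h3 : ((-1:ℝ)^(k-j)) * ((-1:ℝ)^(k-j)) = 1 := by
        rw [← pow_add]; exact Even.neg_one_pow ⟨k-j, rfl⟩
      calc (-1:ℝ)^j = ((-1:ℝ)^(k-j) * (-1:ℝ)^(k-j)) * (-1:ℝ)^j := by rw [h3, one_mul]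
        _ = (-1:ℝ)^(k-j) * ((-1:ℝ)^(k-j) * (-1:ℝ)^j) := by ring
        _ = (-1:ℝ)^k * (-1:ℝ)^(k-j) := by rw [h2]; ring
    rw [hpow]; ring
  rw [heq, ← h', mul_zero]

lemma prod_choose (k j : ℕ) :
    ∏ i ∈ Finset.range k, (j + 1 + i) = k.factorial * (k + j).choose j := by
  induction k with
  | zero => simp
  | succ k ih =>
    rw [Finset.prod_range_succ, ih, Nat.factorial_succ]
    have h1 : (k + j).choose j = (k + j).choose k := by
      rw [Nat.add_comm k j, Nat.choose_symm_add]
    have h2 : (k + j + 1) * (k + j).choose k = (k + j + 1).choose (k + 1) * (k + 1) := by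
      exact_mod_cast Nat.add_one_mul_choose_eq (k + j) k
    have h3 : (k + 1 + j).choose j = (k + j + 1).choose (k + 1) := by
      rw [show k + 1 + j = (k+1) + j from rfl, Nat.add_comm (k+1) j, Nat.choose_symm_add,
        Nat.add_comm j (k+1), show k + 1 + j = k + j + 1 by omega]
    rw [h3, h1, show j + 1 + k = k + j + 1 by omega]
    nlinarith [h2]

lemma core_vanish (k m : ℕ) (hm : m < k) :
    ∑ j ∈ Finset.range (k+1),
      (k.choose j : ℝ) * ((k+j).choose j : ℝ) * (-1:ℝ)^j / ((j:ℝ) + m + 1) = 0 := by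
  set G : ℝ[X] := C ((k.factorial:ℝ))⁻¹ * ∏ i ∈ (Finset.range k).erase m, (X + C ((i:ℝ)+1))
    with hG
  have hGdeg : G.degree < k := by
    have h1 : G.natDegree ≤ k - 1 := by
      refine natDegree_mul_le.trans ?_
      rw [natDegree_C, zero_add]
      refine (natDegree_prod_le _ _).trans ?_
      have : ∀ i ∈ (Finset.range k).erase m, (X + C ((i:ℝ)+1)).natDegree = 1 := fun i _ =>
        natDegree_X_add_C _
      rw [Finset.sum_congr rfl this, Finset.sum_const, smul_eq_mul, mul_one,
        Finset.card_erase_of_mem (Finset.mem_range.mpr hm), Finset.card_range]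
    refine (degree_le_natDegree).trans_lt ?_
    exact_mod_cast lt_of_le_of_lt (Nat.cast_le.mpr h1) (Nat.cast_lt.mpr (by omega))
  have hGeval : ∀ j : ℕ, G.eval (j:ℝ) = ((k+j).choose j : ℝ) / ((j:ℝ) + m + 1) := by
    intro j
    have hjm : ((j:ℝ) + m + 1) ≠ 0 := by positivity
    have hfac : ((k.factorial : ℝ)) ≠ 0 := by exact_mod_cast k.factorial_ne_zero
    have hsplit : ((j:ℝ) + m + 1) * ∏ i ∈ (Finset.range k).erase m, ((j:ℝ) + i + 1)
        = (k.factorial : ℝ) * ((k+j).choose j : ℝ) := by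
      have h2 : ∏ i ∈ Finset.range k, ((j:ℝ) + i + 1)
          = ((j:ℝ) + m + 1) * ∏ i ∈ (Finset.range k).erase m, ((j:ℝ) + i + 1) := by
        rw [← Finset.mul_prod_erase _ _ (Finset.mem_range.mpr hm)]
      rw [← h2]
      have := prod_choose k j
      have hcast : ((∏ i ∈ Finset.range k, (j + 1 + i) : ℕ) : ℝ)
          = ∏ i ∈ Finset.range k, ((j:ℝ) + i + 1) := by
        push_cast
        exact Finset.prod_congr rfl fun i _ => by ring
      rw [← hcast, this]
      push_cast
      ring
    have heval : G.eval (j:ℝ)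
        = (k.factorial : ℝ)⁻¹ * ∏ i ∈ (Finset.range k).erase m, ((j:ℝ) + i + 1) := by
      rw [hG, eval_mul, eval_C, eval_prod]
      congr 1
      exact Finset.prod_congr rfl fun i _ => by rw [eval_add, eval_X, eval_C]; ring
    rw [heval]
    field_simp at hsplit ⊢
    nlinarith [hsplit]
  have := alt_sum_zero k G hGdeg
  rw [← this]
  refine Finset.sum_congr rfl fun j _ => ?_
  rw [hGeval j]
  ring

lemma legPpoly_eval (k : ℕ) (x : ℝ) : (legPpoly k).eval x = legP k x := by
  rw [legPpoly, legP, eval_mul, eval_C, eval_finset_sum]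
  congr 1
  exact Finset.sum_congr rfl fun j _ => by rw [eval_mul, eval_C, eval_pow, eval_X]

lemma natDegree_legPpoly (k : ℕ) : (legPpoly k).natDegree ≤ k := by
  rw [legPpoly]
  refine natDegree_mul_le.trans ?_
  rw [natDegree_C, zero_add]
  refine (natDegree_sum_le _ _).trans ?_
  rw [Finset.fold_max_le]
  refine ⟨Nat.zero_le _, fun j hj => ?_⟩
  refine natDegree_mul_le.trans ?_
  rw [natDegree_C, natDegree_X_pow, zero_add]
  exact Nat.lt_succ_iff.mp (Finset.mem_range.mp hj)

lemma Jf_legP_mono (k m : ℕ) (hm : m < k) : Jf (legPpoly k * (C 1 * X ^ m)) = 0 := by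
  rw [legPpoly]
  rw [mul_assoc, Jf_C_mul]
  rw [Finset.sum_mul, Jf_sum]
  have heach : ∀ j ∈ Finset.range (k+1),
      Jf ((C ((Nat.choose k j : ℝ) * (Nat.choose (k + j) j : ℝ) * (-1 : ℝ) ^ j) * X ^ j) *
        (C 1 * X ^ m))
      = (k.choose j : ℝ) * ((k+j).choose j : ℝ) * (-1:ℝ)^j / ((j:ℝ) + m + 1) := by
    intro j _
    have : (C ((Nat.choose k j : ℝ) * (Nat.choose (k + j) j : ℝ) * (-1 : ℝ) ^ j) * X ^ j) *
        (C 1 * X ^ m)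
        = C ((Nat.choose k j : ℝ) * (Nat.choose (k + j) j : ℝ) * (-1 : ℝ) ^ j) * X ^ (j + m) := by
      rw [map_one, pow_add]; ring
    rw [this, Jf_monomial]
    push_cast
    ring_nf
  rw [Finset.sum_congr rfl heach, core_vanish k m hm, mul_zero]

lemma Jf_orth (k : ℕ) (Q : ℝ[X]) (hQ : Q.natDegree < k) : Jf (legPpoly k * Q) = 0 := by
  have hrepr : Q = ∑ n ∈ Finset.range k, C (Q.coeff n) * X ^ n := by
    conv_lhs => rw [Q.as_sum_range' k hQ]
    exact Finset.sum_congr rfl fun n _ => (C_mul_X_pow_eq_monomial).symm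
  rw [hrepr, Finset.mul_sum, Jf_sum]
  refine Finset.sum_eq_zero fun n hn => ?_
  have : legPpoly k * (C (Q.coeff n) * X ^ n) = C (Q.coeff n) * (legPpoly k * (C 1 * X ^ n)) := by
    rw [map_one]; ring
  rw [this, Jf_C_mul, Jf_legP_mono k n (Finset.mem_range.mp hn), mul_zero]

/-- The iterated polynomial integral (continuation `Q` innermost). -/
noncomputable def iterAux : List ℕ → ℝ[X] → ℝ[X]
  | [], Q => Q
  | c :: ds, Q => intP (legPpoly (c-1) * iterAux ds Q)

/-- The "integration by parts" cofactor. -/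
noncomputable def coB : List ℕ → ℝ[X] → ℝ[X]
  | [], u => C (Jf u) - intP u
  | c :: as, u => coB as (legPpoly (c-1) * (C (Jf u) - intP u))

lemma keyA : ∀ (a : List ℕ) (u h : ℝ[X]), Jf (u * iterAux a (intP h)) = Jf (coB a u * h) := by
  intro a
  induction a with
  | nil => intro u h; exact Jf_parts u h
  | cons c as ih =>
    intro u h
    rw [show iterAux (c :: as) (intP h) = intP (legPpoly (c-1) * iterAux as (intP h)) from rfl]
    rw [Jf_parts u _]
    rw [show (C (Jf u) - intP u) * (legPpoly (c-1) * iterAux as (intP h))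
      = (legPpoly (c-1) * (C (Jf u) - intP u)) * iterAux as (intP h) by ring]
    rw [ih]
    rfl

lemma natDegree_coB : ∀ (a : List ℕ) (u : ℝ[X]), (∀ c ∈ a, 1 ≤ c) →
    (coB a u).natDegree ≤ a.sum + u.natDegree + 1 := by
  intro a
  induction a with
  | nil =>
    intro u _
    refine (natDegree_sub_le _ _).trans ?_
    simp only [natDegree_C, List.sum_nil, zero_add]
    exact max_le (Nat.zero_le _) (natDegree_intP u)
  | cons c as ih =>
    intro u hc
    rw [show coB (c :: as) u = coB as (legPpoly (c-1) * (C (Jf u) - intP u)) from rfl]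
    refine (ih _ (fun x hx => hc x (List.mem_cons_of_mem _ hx))).trans ?_
    have h1 : (legPpoly (c-1) * (C (Jf u) - intP u)).natDegree ≤ (c-1) + (u.natDegree + 1) := by
      refine natDegree_mul_le.trans ?_
      refine Nat.add_le_add (natDegree_legPpoly _) ?_
      refine (natDegree_sub_le _ _).trans ?_
      simp only [natDegree_C]
      exact max_le (Nat.zero_le _) (natDegree_intP u)
    have hc1 : 1 ≤ c := hc c List.mem_cons_self
    rw [List.sum_cons]
    omega

lemma natDegree_iterAux : ∀ (b : List ℕ), (∀ c ∈ b, 1 ≤ c) →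
    (iterAux b 1).natDegree ≤ b.sum := by
  intro b
  induction b with
  | nil => intro _; simp [iterAux]
  | cons c bs ih =>
    intro hc
    rw [show iterAux (c :: bs) 1 = intP (legPpoly (c-1) * iterAux bs 1) from rfl]
    refine (natDegree_intP _).trans ?_
    have h1 := natDegree_mul_le (p := legPpoly (c-1)) (q := iterAux bs 1)
    have h2 := natDegree_legPpoly (c-1)
    have h3 := ih (fun x hx => hc x (List.mem_cons_of_mem _ hx))
    have hc1 : 1 ≤ c := hc c List.mem_cons_self
    rw [List.sum_cons]
    omega

lemma iterAux_append : ∀ (xs ys : List ℕ) (Q : ℝ[X]),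
    iterAux (xs ++ ys) Q = iterAux xs (iterAux ys Q) := by
  intro xs ys Q
  induction xs with
  | nil => rfl
  | cons c as ih => rw [List.cons_append]; show intP _ = intP _; rw [ih]

lemma legIter_eq : ∀ (ds : List ℕ) (t : ℝ), legIter ds t = (iterAux ds 1).eval t := by
  intro ds
  induction ds with
  | nil => intro t; simp [legIter, iterAux]
  | cons c as ih =>
    intro t
    rw [show iterAux (c :: as) 1 = intP (legPpoly (c-1) * iterAux as 1) from rfl, eval_intP]
    rw [show legIter (c :: as) t = ∫ x in (0:ℝ)..t, legP (c - 1) x * legIter as x from rfl]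
    refine intervalIntegral.integral_congr fun x _ => ?_
    rw [eval_mul, legPpoly_eval, ih]

lemma main_vanish (c : ℕ) (a b : List ℕ) (ha : ∀ x ∈ a, 1 ≤ x) (hb : ∀ x ∈ b, 1 ≤ x)
    (hc : a.sum + b.sum + 2 ≤ c) :
    (iterAux (a ++ c :: b) 1).eval 1 = 0 := by
  rw [iterAux_append]
  have hW : (iterAux b 1).natDegree ≤ b.sum := natDegree_iterAux b hb
  cases a with
  | nil =>
    show Jf (legPpoly (c-1) * iterAux b 1) = 0
    refine Jf_orth _ _ ?_
    simp only [List.sum_nil, zero_add] at hc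
    omega
  | cons c' as =>
    have ha' : ∀ x ∈ as, 1 ≤ x := fun x hx => ha x (List.mem_cons_of_mem _ hx)
    show Jf (legPpoly (c'-1) * iterAux as (intP (legPpoly (c-1) * iterAux b 1))) = 0
    rw [keyA]
    rw [show coB as (legPpoly (c'-1)) * (legPpoly (c-1) * iterAux b 1)
      = legPpoly (c-1) * (coB as (legPpoly (c'-1)) * iterAux b 1) by ring]
    refine Jf_orth _ _ ?_
    have h1 := natDegree_coB as (legPpoly (c'-1)) ha'
    have h2 := natDegree_legPpoly (c'-1)
    have h3 := natDegree_mul_le (p := coB as (legPpoly (c'-1))) (q := iterAux b 1)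
    have hc1 : 1 ≤ c' := ha c' List.mem_cons_self
    rw [List.sum_cons] at hc
    omega

end LegAux

/-- Let `p` be even and let `w = A_{d₁}⋯A_{d_ℓ}` be a word of grade
`d₁ + ⋯ + d_ℓ ≤ p` containing a letter `A_{d_{j₀}}` with `d_{j₀} ≥ p/2 + 1`.  Then some
index `d_j` exceeds the sum of the others by at least 2, and consequently the coefficient
of `w` in the exact solution operator `exp(Ω)` — the iterated simplex integral of
`P_{d₁−1}(x₁)⋯P_{d_ℓ−1}(x_ℓ)` — vanishes. -/
theorem high_letter_coeff_vanishes (p ℓ : ℕ) (hp : Even p)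
    (d : Fin ℓ → ℕ) (hd : ∀ j, 1 ≤ d j)
    (hgrade : ∑ j : Fin ℓ, d j ≤ p)
    (j₀ : Fin ℓ) (hbig : p / 2 + 1 ≤ d j₀) :
    (∃ j : Fin ℓ, 2 + ∑ i ∈ Finset.univ.erase j, d i ≤ d j) ∧
    legIter (List.ofFn d) 1 = 0 := by
  obtain ⟨q, hq⟩ := hp
  have herase : (∑ i ∈ Finset.univ.erase j₀, d i) + d j₀ = ∑ j : Fin ℓ, d j :=
    Finset.sum_erase_add _ _ (Finset.mem_univ j₀)
  have hkey : 2 + ∑ i ∈ Finset.univ.erase j₀, d i ≤ d j₀ := by omega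
  refine ⟨⟨j₀, hkey⟩, ?_⟩
  have hlen : (j₀ : ℕ) < (List.ofFn d).length := by
    rw [List.length_ofFn]; exact j₀.isLt
  have hL : List.ofFn d
      = (List.ofFn d).take (j₀ : ℕ) ++ d j₀ :: (List.ofFn d).drop ((j₀ : ℕ)+1) := by
    conv_lhs => rw [← List.take_append_drop (j₀:ℕ) (List.ofFn d)]
    congr 1
    rw [List.drop_eq_getElem_cons hlen]
    congr 1
    simp
  have hmemL : ∀ c ∈ List.ofFn d, 1 ≤ c := by
    intro c hc
    rw [List.mem_ofFn] at hc
    obtain ⟨i, rfl⟩ := hc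
    exact hd i
  have hsum : ((List.ofFn d).take (j₀:ℕ)).sum + d j₀ + ((List.ofFn d).drop ((j₀:ℕ)+1)).sum
      = ∑ j : Fin ℓ, d j := by
    have h1 := congrArg List.sum hL
    rw [List.sum_append, List.sum_cons, List.sum_ofFn] at h1
    omega
  rw [LegAux.legIter_eq, hL]
  refine LegAux.main_vanish (d j₀) _ _
    (fun x hx => hmemL x (List.mem_of_mem_take hx))
    (fun x hx => hmemL x (List.mem_of_mem_drop hx)) ?_
  omega
end

section
/- Every Lyndon word w of grade q < p over the alphabet {A_1, …, A_p} (grade(A_k) = k) other than the single letter A_1 is a proper right factor of a Lyndon word of grade exactly p, namely of A_1^{p−q} w (the word obtained by prepending p−q copies of A_1 to w). -/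
open scoped BigOperators

section LyndonAux

private lemma aux_not_append_lt (l x : List ℕ+) : ¬ (l ++ x < l) := by
  induction l with
  | nil =>
    intro h
    have h' : List.Lex (· < ·) ([] ++ x) ([] : List ℕ+) := h
    cases h'
  | cons a t ih =>
    intro h
    have h' : List.Lex (· < ·) (a :: (t ++ x)) (a :: t) := h
    cases h' with
    | cons h2 => exact ih h2
    | rel h2 => exact lt_irrefl a h2

private lemma aux_has_big (w : List ℕ+) (hw : NC.Lyndon w) (hne : w ≠ [1]) :
    ∃ a ∈ w, (1 : ℕ+) < a := by
  by_contra hall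
  push_neg at hall
  have hrep : w = List.replicate w.length 1 := by
    apply List.eq_replicate_of_mem
    intro a ha
    exact le_antisymm (hall a ha) a.one_le
  obtain ⟨hwne, hlyn⟩ := hw
  have hlen : 1 ≤ w.length := List.length_pos_iff.2 hwne
  rcases eq_or_lt_of_le hlen with h1 | h1
  · exact hne (by rw [hrep, ← h1]; rfl)
  · have hlt := hlyn 1 one_pos h1
    rw [hrep] at hlt
    rw [show (List.replicate w.length (1:ℕ+)).drop 1 = List.replicate (w.length - 1) 1 by
      simp [List.drop_replicate]] at hlt
    apply aux_not_append_lt (List.replicate (w.length - 1) (1:ℕ+)) (List.replicate 1 1)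
    rw [← List.replicate_add, Nat.sub_add_cancel hlen]
    exact hlt

private lemma aux_cons_one_lt (w : List ℕ+) (hbig : ∃ a ∈ w, (1 : ℕ+) < a) :
    (1 : ℕ+) :: w < w := by
  induction w with
  | nil => obtain ⟨a, ha, _⟩ := hbig; cases ha
  | cons b t ih =>
    rcases lt_or_eq_of_le b.one_le with hb | hb
    · exact List.Lex.rel hb
    · have hbig' : ∃ a ∈ t, (1 : ℕ+) < a := by
        obtain ⟨a, ha, h1a⟩ := hbig
        rcases List.mem_cons.1 ha with rfl | ha
        · exact absurd h1a (by rw [← hb]; exact lt_irrefl 1)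
        · exact ⟨a, ha, h1a⟩
      rw [← hb]
      exact (List.Lex.cons (ih hbig') : List.Lex (· < ·) ((1:ℕ+) :: 1 :: t) (1 :: t))

private lemma aux_rep_lt (w : List ℕ+) (hbig : ∃ a ∈ w, (1 : ℕ+) < a) :
    ∀ c : ℕ, 0 < c → List.replicate c (1 : ℕ+) ++ w < w := by
  intro c hc
  induction c with
  | zero => cases hc
  | succ n ih =>
    rcases Nat.eq_zero_or_pos n with rfl | hn
    · simpa using aux_cons_one_lt w hbig
    · have h1 : List.replicate (n+1) (1:ℕ+) ++ w = (1:ℕ+) :: (List.replicate n 1 ++ w) := by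
        simp [List.replicate_succ]
      have hbig' : ∃ a ∈ List.replicate n (1:ℕ+) ++ w, (1 : ℕ+) < a := by
        obtain ⟨a, ha, h1a⟩ := hbig
        exact ⟨a, List.mem_append_right _ ha, h1a⟩
      calc List.replicate (n+1) (1:ℕ+) ++ w
          = (1:ℕ+) :: (List.replicate n 1 ++ w) := h1
        _ < List.replicate n 1 ++ w := aux_cons_one_lt _ hbig'
        _ < w := ih hn

private lemma aux_append_left_lt (s x y : List ℕ+) (h : x < y) : s ++ x < s ++ y :=
  (List.Lex.append_left _ (h : List.Lex (· < ·) x y) s : _)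

end LyndonAux

/-- Over the alphabet `{A₁, A₂, …}` (modelled as `ℕ+`, `grade(A_k) = k`),
every Lyndon word `w ≠ A₁` of grade `q < p` is a proper right factor of a Lyndon word of
grade exactly `p`, namely of `A₁^{p−q} w`. -/
theorem lyndon_prepend_a1 (p q : ℕ) (w : List ℕ+)
    (hw : NC.Lyndon w) (hne : w ≠ [1])
    (hgrade : NC.wgrade (fun k => (k : ℕ)) w = q) (hqp : q < p) :
    NC.Lyndon (List.replicate (p - q) (1 : ℕ+) ++ w) ∧
    NC.wgrade (fun k => (k : ℕ)) (List.replicate (p - q) (1 : ℕ+) ++ w) = p ∧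
    w <:+ List.replicate (p - q) (1 : ℕ+) ++ w ∧
    w ≠ List.replicate (p - q) (1 : ℕ+) ++ w := by
  obtain ⟨hwne, hlyn⟩ := hw
  set r := p - q with hr
  have hrpos : 0 < r := Nat.sub_pos_of_lt hqp
  have hbig := aux_has_big w ⟨hwne, hlyn⟩ hne
  refine ⟨⟨?_, ?_⟩, ?_, ⟨List.replicate r 1, rfl⟩, ?_⟩
  · simp [hwne]
  · intro i hi hilen
    rw [List.length_append, List.length_replicate] at hilen
    rcases le_or_gt i r with hir | hir
    · -- drop i = replicate (r - i) 1 ++ w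
      have hdrop : (List.replicate r (1:ℕ+) ++ w).drop i = List.replicate (r - i) 1 ++ w := by
        rw [List.drop_append_of_le_length (by simpa using hir)]
        simp [List.drop_replicate]
      rw [hdrop]
      have hsplit : List.replicate r (1:ℕ+) ++ w
          = List.replicate (r - i) 1 ++ (List.replicate i 1 ++ w) := by
        rw [← List.append_assoc, ← List.replicate_add, Nat.sub_add_cancel hir]
      rw [hsplit]
      exact aux_append_left_lt _ _ _ (aux_rep_lt w hbig i hi)
    · -- drop i = drop (i - r) w, a proper right factor of w
      have hdrop : (List.replicate r (1:ℕ+) ++ w).drop i = w.drop (i - r) := by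
        have hieq : i = (List.replicate r (1:ℕ+)).length + (i - r) := by
          simp; omega
        conv_lhs => rw [hieq]
        rw [List.drop_length_add_append]
      rw [hdrop]
      have h1 : List.replicate r (1:ℕ+) ++ w < w := aux_rep_lt w hbig r hrpos
      have h2 : w < w.drop (i - r) :=
        hlyn (i - r) (Nat.sub_pos_of_lt hir) (by omega)
      exact lt_trans h1 h2
  · have : NC.wgrade (fun k => (k : ℕ)) (List.replicate r (1:ℕ+) ++ w)
        = r + q := by
      rw [← hgrade]
      have hrep : ((List.replicate r (1:ℕ+)).flatMap fun (a : ℕ+) => [(↑a : ℕ)])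
          = List.replicate r 1 := by
        induction r with
        | zero => simp
        | succ n ih => simp_all [List.replicate_succ]
      simp [NC.wgrade, List.flatMap_append, hrep]
    rw [this]; omega
  · intro h
    have := congrArg List.length h
    rw [List.length_append, List.length_replicate] at this
    omega
end
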